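/- arXiv:1607.07681 — 5 statements merged into one kernel-verified Lean document; each statement's English description precedes it below -/
import Mathlib

section
/- For every real p > N with N ≥ 1 a natural number, ∫₀¹ |ln t|^{p-1} · t^{N-1}/(1-t²)^N dt = Γ(p)/(N-1)! · Σ_{k=0}^∞ (N+k-1)!/k! · 1/(N+2k)^p. -/
open Real MeasureTheory

lemma stmt4_exp_neg_image : (fun x : ℝ => Real.exp (-x)) '' Set.Ioi 0 = Set.Ioo 0 1 := by
  ext y
  constructor
  · rintro ⟨x, hx, rfl⟩
    exact ⟨Real.exp_pos _, Real.exp_lt_one_iff.2 (by simpa using hx)⟩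
  · rintro ⟨hy0, hy1⟩
    exact ⟨-Real.log y, by simpa using Real.log_neg hy0 hy1, by simp [Real.exp_log hy0]⟩

lemma stmt4_deriv : ∀ x ∈ Set.Ioi (0:ℝ),
    HasDerivWithinAt (fun x : ℝ => Real.exp (-x)) (-Real.exp (-x)) (Set.Ioi 0) x := by
  intro x _
  have h : HasDerivAt (fun x : ℝ => Real.exp (-x)) (-Real.exp (-x)) x := by
    simpa using (hasDerivAt_neg x).exp
  exact h.hasDerivWithinAt

lemma stmt4_inj : Set.InjOn (fun x : ℝ => Real.exp (-x)) (Set.Ioi 0) := by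
  intro a _ b _ h
  have := Real.exp_injective h
  linarith

lemma stmt4_smul_eq (a q : ℝ) : ∀ x ∈ Set.Ioi (0:ℝ),
    |(-Real.exp (-x))| • (|Real.log (Real.exp (-x))| ^ (q - 1) * (Real.exp (-x)) ^ (a - 1))
      = x ^ (q - 1) * Real.exp (-(a * x)) := by
  intro x hx
  have hx0 : (0:ℝ) < x := hx
  simp only [smul_eq_mul, abs_neg, abs_of_pos (Real.exp_pos _), Real.log_exp,
    abs_of_pos hx0, Real.rpow_def_of_pos (Real.exp_pos (-x)), Real.log_exp]
  rw [show -(a*x) = -x + -x * (a-1) by ring, Real.exp_add]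
  ring

lemma stmt4_aux_int {a q : ℝ} (ha : 0 < a) (hq : 0 < q) :
    IntegrableOn (fun x : ℝ => x ^ (q - 1) * Real.exp (-(a * x))) (Set.Ioi 0) := by
  have := integrableOn_rpow_mul_exp_neg_mul_rpow (p := 1) (s := q - 1) (b := a)
    (by linarith) zero_lt_one ha
  simpa [Real.rpow_one, neg_mul] using this

lemma stmt4_key_int {a q : ℝ} (ha : 0 < a) (hq : 0 < q) :
    IntegrableOn (fun t : ℝ => |Real.log t| ^ (q - 1) * t ^ (a - 1)) (Set.Ioo 0 1) := by
  rw [← stmt4_exp_neg_image]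
  rw [integrableOn_image_iff_integrableOn_abs_deriv_smul measurableSet_Ioi stmt4_deriv stmt4_inj]
  exact (stmt4_aux_int ha hq).congr_fun (fun x hx => (stmt4_smul_eq a q x hx).symm)
    measurableSet_Ioi

lemma stmt4_key_val {a q : ℝ} (ha : 0 < a) (hq : 0 < q) :
    ∫ t in Set.Ioo (0:ℝ) 1, |Real.log t| ^ (q - 1) * t ^ (a - 1)
      = Real.Gamma q / a ^ q := by
  rw [← stmt4_exp_neg_image,
    integral_image_eq_integral_abs_deriv_smul measurableSet_Ioi stmt4_deriv stmt4_inj]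
  rw [MeasureTheory.setIntegral_congr_fun measurableSet_Ioi (stmt4_smul_eq a q)]
  rw [integral_rpow_mul_exp_neg_mul_Ioi hq ha, Real.div_rpow zero_le_one ha.le,
    Real.one_rpow, one_div_mul_eq_div]

/-- For `N ≥ 1` and real `p > N`,
`∫₀¹ |ln t|^(p-1) t^(N-1)/(1-t²)^N dt = Γ(p)/(N-1)! · Σ_k (N+k-1)!/k! · (N+2k)^(-p)`. -/
theorem stmt4 (N : ℕ) (hN : 1 ≤ N) (p : ℝ) (hp : (N : ℝ) < p) :
    ∫ t in Set.Ioo (0 : ℝ) 1, |Real.log t| ^ (p - 1) * t ^ (N - 1) / (1 - t ^ 2) ^ N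
    = Real.Gamma p / ((N - 1).factorial : ℝ)
      * ∑' k : ℕ, ((N + k - 1).factorial : ℝ) / (k.factorial : ℝ)
        * (1 / ((N : ℝ) + 2 * k) ^ p) := by
  have hN1 : (1:ℝ) ≤ N := by exact_mod_cast hN
  have hp0 : 0 < p := by linarith
  set F : ℕ → ℝ → ℝ := fun k t =>
    ((k + (N-1)).choose (N-1) : ℝ) * (|Real.log t| ^ (p-1) * t ^ ((N:ℝ) + 2*k - 1)) with hF
  have hA : ∀ k : ℕ, (0:ℝ) < (N:ℝ) + 2*k := by
    intro k; have : (0:ℝ) ≤ 2*k := by positivity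
    linarith
  -- value of each integral
  have hval : ∀ k : ℕ, ∫ t in Set.Ioo (0:ℝ) 1, F k t
      = ((k + (N-1)).choose (N-1) : ℝ) * (Real.Gamma p / ((N:ℝ) + 2*k) ^ p) := by
    intro k
    rw [hF]
    simp only
    rw [MeasureTheory.integral_const_mul]
    congr 1
    exact stmt4_key_val (hA k) hp0
  -- integrability
  have hFint : ∀ k : ℕ, Integrable (F k) (volume.restrict (Set.Ioo (0:ℝ) 1)) := by
    intro k
    exact ((stmt4_key_int (hA k) hp0).const_mul _)
  -- F is nonneg on Ioo 0 1
  have hFnn : ∀ k : ℕ, ∀ t ∈ Set.Ioo (0:ℝ) 1, ‖F k t‖ = F k t := by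
    intro k t ht
    have ht0 : 0 < t := ht.1
    rw [Real.norm_eq_abs, abs_of_nonneg]
    positivity
  have hnormval : ∀ k : ℕ, (∫ t in Set.Ioo (0:ℝ) 1, ‖F k t‖)
      = ((k + (N-1)).choose (N-1) : ℝ) * (Real.Gamma p / ((N:ℝ) + 2*k) ^ p) := by
    intro k
    rw [MeasureTheory.setIntegral_congr_fun measurableSet_Ioo (hFnn k), hval k]
  -- summability
  have hsum : Summable (fun k : ℕ =>
      ((k + (N-1)).choose (N-1) : ℝ) * (Real.Gamma p / ((N:ℝ) + 2*k) ^ p)) := by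
    have hs : Summable (fun k : ℕ => ((k:ℝ) + 1) ^ ((N:ℝ) - 1 - p)) := by
      have h1 : Summable (fun k : ℕ => ((k:ℝ)) ^ ((N:ℝ) - 1 - p)) :=
        Real.summable_nat_rpow.2 (by linarith)
      have := (summable_nat_add_iff 1).2 h1
      simpa using this
    have hbound : ∀ k : ℕ, ((k + (N-1)).choose (N-1) : ℝ) * (1 / ((N:ℝ) + 2*k) ^ p)
        ≤ ((k:ℝ) + 1) ^ ((N:ℝ) - 1 - p) := by
      intro k
      have hAk := hA k
      have hchoose : ((k + (N-1)).choose (N-1) : ℝ) ≤ ((N:ℝ) + 2*k) ^ (N-1 : ℕ) := by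
        have h1 : (k + (N-1)).choose (N-1) ≤ (k + (N-1)) ^ (N-1) :=
          Nat.choose_le_pow _ _
        have h2 : (k + (N-1)) ^ (N-1) ≤ (N + 2*k) ^ (N-1) :=
          Nat.pow_le_pow_left (by omega) _
        calc ((k + (N-1)).choose (N-1) : ℝ) ≤ ((N + 2*k : ℕ) : ℝ) ^ (N-1 : ℕ) := by
              exact_mod_cast le_trans h1 h2
          _ = ((N:ℝ) + 2*k) ^ (N-1 : ℕ) := by push_cast; ring_nf
      have hpow : ((N:ℝ) + 2*k) ^ (N-1 : ℕ) = ((N:ℝ) + 2*k) ^ (((N:ℝ) - 1)) := by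
        rw [← Real.rpow_natCast _ (N-1)]
        congr 1
        push_cast [Nat.cast_sub hN]
        ring
      calc ((k + (N-1)).choose (N-1) : ℝ) * (1 / ((N:ℝ) + 2*k) ^ p)
          ≤ ((N:ℝ) + 2*k) ^ (((N:ℝ) - 1)) * (1 / ((N:ℝ) + 2*k) ^ p) := by
            apply mul_le_mul_of_nonneg_right (by rw [← hpow]; exact hchoose)
            positivity
        _ = ((N:ℝ) + 2*k) ^ (((N:ℝ) - 1 - p)) := by
            rw [mul_one_div, ← Real.rpow_sub hAk]
        _ ≤ ((k:ℝ) + 1) ^ ((N:ℝ) - 1 - p) := by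
            apply Real.rpow_le_rpow_of_nonpos (by positivity) (by linarith) (by linarith)
    have hsum1 : Summable (fun k : ℕ =>
        ((k + (N-1)).choose (N-1) : ℝ) * (1 / ((N:ℝ) + 2*k) ^ p)) := by
      apply Summable.of_nonneg_of_le (fun k => by positivity) hbound hs
    have := hsum1.mul_left (Real.Gamma p)
    apply this.congr
    intro k
    ring
  have hFsum : Summable (fun k : ℕ => ∫ t in Set.Ioo (0:ℝ) 1, ‖F k t‖) :=
    hsum.congr (fun k => (hnormval k).symm)
  -- interchange
  have hinter := MeasureTheory.integral_tsum_of_summable_integral_norm hFint hFsum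
  -- pointwise sum
  have hpt : ∀ t ∈ Set.Ioo (0:ℝ) 1,
      (∑' k, F k t) = |Real.log t| ^ (p-1) * t ^ (N-1) / (1 - t^2) ^ N := by
    intro t ht
    obtain ⟨ht0, ht1⟩ := ht
    have hr : ‖t^2‖ < 1 := by
      rw [Real.norm_eq_abs, abs_of_nonneg (sq_nonneg t)]
      nlinarith
    have hs := (hasSum_choose_mul_geometric_of_norm_lt_one (𝕜 := ℝ) (N-1) hr).mul_left
      (|Real.log t| ^ (p-1) * t ^ (N-1 : ℕ))
    rw [Nat.sub_add_cancel hN] at hs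
    have hpow : ∀ n : ℕ, t ^ ((N:ℝ) + 2*n - 1) = t ^ (N-1 : ℕ) * (t^2) ^ n := by
      intro n
      rw [← pow_mul, ← pow_add, ← Real.rpow_natCast t (N-1+2*n)]
      congr 1
      push_cast [Nat.cast_sub hN]
      ring
    calc (∑' k, F k t)
        = ∑' k, (|Real.log t| ^ (p-1) * t ^ (N-1 : ℕ))
            * (((k + (N-1)).choose (N-1) : ℝ) * (t^2) ^ k) := by
          apply tsum_congr
          intro n
          rw [hF]
          simp only
          rw [hpow n]
          ring
      _ = (|Real.log t| ^ (p-1) * t ^ (N-1 : ℕ)) * (1 / (1 - t^2) ^ N) := hs.tsum_eq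
      _ = |Real.log t| ^ (p-1) * t ^ (N-1) / (1 - t^2) ^ N := by
          rw [mul_one_div]
  -- put it together
  have hL : (∫ t in Set.Ioo (0 : ℝ) 1, |Real.log t| ^ (p - 1) * t ^ (N - 1) / (1 - t ^ 2) ^ N)
      = ∑' k, ∫ t in Set.Ioo (0:ℝ) 1, F k t := by
    rw [hinter]
    exact (MeasureTheory.setIntegral_congr_fun measurableSet_Ioo
      (fun t ht => (hpt t ht).symm))
  rw [hL]
  -- evaluate the sum
  have hfact : ∀ k : ℕ, ((k + (N-1)).choose (N-1) : ℝ) * ((N-1).factorial : ℝ)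
      * (k.factorial : ℝ) = ((N + k - 1).factorial : ℝ) := by
    intro k
    have h1 : N + k - 1 = k + (N - 1) := by omega
    rw [h1]
    have := Nat.choose_mul_factorial_mul_factorial (Nat.le_add_left (N-1) k)
    rw [Nat.add_sub_cancel] at this
    exact_mod_cast this
  rw [← tsum_mul_left]
  apply tsum_congr
  intro k
  rw [hval k]
  have h1 := hfact k
  have h2 : ((N-1).factorial : ℝ) ≠ 0 := by positivity
  have h3 : (k.factorial : ℝ) ≠ 0 := by positivity
  have h4 : ((N:ℝ) + 2*k) ^ p ≠ 0 := by
    have := hA k; positivity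
  field_simp
  linear_combination h1
end

section
/- Let N ≥ 2. Then lim_{p→N⁺} (p - N) · Σ_{k=0}^∞ (N+k-1)!/k! · 1/(N+2k)^p = 1/2^N. -/
open Filter Topology

lemma pow_sub_pow_le_aux (m : ℕ) {x y : ℝ} (hx : 0 ≤ x) (hxy : x ≤ y) :
    y ^ (m + 1) - x ^ (m + 1) ≤ ((m : ℝ) + 1) * (y - x) * y ^ m := by
  induction m with
  | zero => simp
  | succ n ih =>
    have hy : 0 ≤ y := hx.trans hxy
    have h1 : y ^ (n + 2) - x ^ (n + 2)
        = y * (y ^ (n + 1) - x ^ (n + 1)) + (y - x) * x ^ (n + 1) := by ring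
    have h2 : y * (y ^ (n + 1) - x ^ (n + 1)) ≤ y * (((n : ℝ) + 1) * (y - x) * y ^ n) :=
      mul_le_mul_of_nonneg_left ih hy
    have h3 : (y - x) * x ^ (n + 1) ≤ (y - x) * y ^ (n + 1) :=
      mul_le_mul_of_nonneg_left (pow_le_pow_left₀ hx hxy _) (sub_nonneg.2 hxy)
    calc y ^ (n + 2) - x ^ (n + 2)
        ≤ y * (((n : ℝ) + 1) * (y - x) * y ^ n) + (y - x) * y ^ (n + 1) := by
          rw [h1]; exact add_le_add h2 h3
      _ = ((↑(n+1) : ℝ) + 1) * (y - x) * y ^ (n + 1) := by push_cast; ring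

-- key pointwise estimates
lemma exp_merge {u : ℝ} (hu0 : 0 < u) (M : ℕ) (p : ℝ) :
    u ^ (M + 1) * u ^ (-p) = u ^ ((M : ℝ) + 1 - p) := by
  rw [← Real.rpow_natCast u (M + 1), ← Real.rpow_add hu0]
  push_cast
  ring_nf

lemma exp_small {u : ℝ} (hu : 1 ≤ u) {M : ℕ} {p : ℝ} (hp : (M : ℝ) + 2 ≤ p) :
    u ^ M * u ^ (-p) ≤ 1 / u ^ 2 := by
  have hu0 : 0 < u := lt_of_lt_of_le one_pos hu
  have h1 : u ^ M * u ^ (-p) = u ^ ((M : ℝ) - p) := by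
    rw [← Real.rpow_natCast u M, ← Real.rpow_add hu0]; ring_nf
  have h2 : u ^ ((M : ℝ) - p) ≤ u ^ (-(2:ℝ)) :=
    Real.rpow_le_rpow_of_exponent_le hu (by linarith)
  have h3 : u ^ (-(2:ℝ)) = 1 / u ^ 2 := by
    rw [Real.rpow_neg hu0.le, one_div, show ((2:ℝ) = ((2:ℕ):ℝ)) by norm_num,
      Real.rpow_natCast]
  rw [h1, ← h3]; exact h2

lemma core_upper (M : ℕ) {p u : ℝ} (hu : 1 ≤ u) (hp : (M : ℝ) + 2 ≤ p) :
    (u + M) ^ (M + 1) * u ^ (-p)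
      ≤ u ^ ((M : ℝ) + 1 - p) + ((M : ℝ) + 1) * M * ((M : ℝ) + 1) ^ M * (1 / u ^ 2) := by
  have hu0 : 0 < u := lt_of_lt_of_le one_pos hu
  have hM0 : (0:ℝ) ≤ M := Nat.cast_nonneg M
  have hd : (u + M) ^ (M + 1) - u ^ (M + 1) ≤ ((M:ℝ) + 1) * M * (u + M) ^ M := by
    have := pow_sub_pow_le_aux M (le_of_lt hu0) (by linarith : u ≤ u + M)
    calc (u + M) ^ (M + 1) - u ^ (M + 1) ≤ ((M:ℝ)+1) * ((u + M) - u) * (u + M) ^ M := this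
      _ = ((M:ℝ) + 1) * M * (u + M) ^ M := by ring
  have hb : (u + M) ^ M ≤ ((M : ℝ) + 1) ^ M * u ^ M := by
    rw [← mul_pow]
    refine pow_le_pow_left₀ (by linarith) ?_ M
    nlinarith
  have hsum : (u + M) ^ (M + 1) ≤ u ^ (M + 1) + ((M:ℝ)+1) * M * (((M:ℝ)+1)^M * u ^ M) := by
    nlinarith [mul_le_mul_of_nonneg_left hb (by positivity : (0:ℝ) ≤ ((M:ℝ)+1)*M)]
  have hup : (0:ℝ) ≤ u ^ (-p) := Real.rpow_nonneg hu0.le _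
  calc (u + M) ^ (M + 1) * u ^ (-p)
      ≤ (u ^ (M + 1) + ((M:ℝ)+1) * M * (((M:ℝ)+1)^M * u ^ M)) * u ^ (-p) :=
        mul_le_mul_of_nonneg_right hsum hup
    _ = u ^ (M+1) * u ^ (-p) + ((M:ℝ)+1) * M * ((M:ℝ)+1)^M * (u ^ M * u ^ (-p)) := by ring
    _ ≤ u ^ ((M : ℝ) + 1 - p) + ((M : ℝ) + 1) * M * ((M : ℝ) + 1) ^ M * (1 / u ^ 2) := by
        rw [exp_merge hu0]
        exact add_le_add le_rfl (mul_le_mul_of_nonneg_left (exp_small hu hp) (by positivity))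

lemma core_lower (M : ℕ) {p u : ℝ} (hu : 1 ≤ u) (hp : (M : ℝ) + 2 ≤ p) :
    (u + M) ^ ((M : ℝ) + 1 - p) - ((M : ℝ) + 1) * M * ((M : ℝ) + 1) ^ M * (1 / u ^ 2)
      ≤ u ^ (M + 1) * (u + M) ^ (-p) := by
  have hu0 : 0 < u := lt_of_lt_of_le one_pos hu
  have hM0 : (0:ℝ) ≤ M := Nat.cast_nonneg M
  have hv : 1 ≤ u + M := by linarith
  have hv0 : 0 < u + M := by linarith
  have hp0 : 0 ≤ p := by linarith
  have hd : (u + M) ^ (M + 1) - u ^ (M + 1) ≤ ((M:ℝ) + 1) * M * (((M:ℝ)+1)^M * u ^ M) := by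
    have h1 := pow_sub_pow_le_aux M (le_of_lt hu0) (by linarith : u ≤ u + M)
    have hb : (u + M) ^ M ≤ ((M : ℝ) + 1) ^ M * u ^ M := by
      rw [← mul_pow]
      refine pow_le_pow_left₀ (by linarith) ?_ M
      nlinarith
    nlinarith [mul_le_mul_of_nonneg_left hb (by positivity : (0:ℝ) ≤ ((M:ℝ)+1)*M)]
  have hvp : (0:ℝ) ≤ (u + M) ^ (-p) := Real.rpow_nonneg hv0.le _
  have hle : (u + M) ^ (-p) ≤ u ^ (-p) := by
    rw [Real.rpow_neg hv0.le, Real.rpow_neg hu0.le]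
    exact inv_anti₀ (Real.rpow_pos_of_pos hu0 p)
      (Real.rpow_le_rpow hu0.le (by linarith) hp0)
  have hsmall : u ^ M * (u + M) ^ (-p) ≤ 1 / u ^ 2 := by
    calc u ^ M * (u + M) ^ (-p) ≤ u ^ M * u ^ (-p) :=
          mul_le_mul_of_nonneg_left hle (by positivity)
      _ ≤ 1 / u ^ 2 := exp_small hu hp
  have key : (u + M) ^ (M + 1) * (u + M) ^ (-p) - u ^ (M + 1) * (u + M) ^ (-p)
      ≤ ((M : ℝ) + 1) * M * ((M : ℝ) + 1) ^ M * (1 / u ^ 2) := by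
    have h2 : ((u + M) ^ (M + 1) - u ^ (M + 1)) * (u + M) ^ (-p)
        ≤ (((M:ℝ) + 1) * M * (((M:ℝ)+1)^M * u ^ M)) * (u + M) ^ (-p) :=
      mul_le_mul_of_nonneg_right hd hvp
    calc (u + M) ^ (M + 1) * (u + M) ^ (-p) - u ^ (M + 1) * (u + M) ^ (-p)
        = ((u + M) ^ (M + 1) - u ^ (M + 1)) * (u + M) ^ (-p) := by ring
      _ ≤ (((M:ℝ) + 1) * M * (((M:ℝ)+1)^M * u ^ M)) * (u + M) ^ (-p) := h2
      _ = (((M:ℝ) + 1) * M * ((M:ℝ)+1)^M) * (u ^ M * (u + M) ^ (-p)) := by ring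
      _ ≤ ((M : ℝ) + 1) * M * ((M : ℝ) + 1) ^ M * (1 / u ^ 2) :=
          mul_le_mul_of_nonneg_left hsmall (by positivity)
  have hm : (u + M) ^ ((M : ℝ) + 1 - p) = (u + M) ^ (M + 1) * (u + M) ^ (-p) :=
    (exp_merge hv0 M p).symm
  linarith [key, hm ▸ key]

set_option maxHeartbeats 2000000 in
/-- For `N ≥ 2`, `lim_{p→N⁺} (p-N) Σ_k (N+k-1)!/k! (N+2k)^(-p) = 2^(-N)`. -/
theorem stmt9 (N : ℕ) (hN : 2 ≤ N) :
    Tendsto (fun p : ℝ => (p - N)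
        * ∑' k : ℕ, ((N + k - 1).factorial : ℝ) / (k.factorial : ℝ)
            * (1 / ((N : ℝ) + 2 * k) ^ p))
      (nhdsWithin (N : ℝ) (Set.Ioi (N : ℝ))) (nhds (1 / 2 ^ N)) := by
  obtain ⟨M, rfl⟩ : ∃ M, N = M + 2 := ⟨N - 2, by omega⟩
  set Nr : ℝ := ((M + 2 : ℕ) : ℝ) with hNr
  have hNrv : Nr = (M : ℝ) + 2 := by rw [hNr]; push_cast; ring
  set C : ℝ := ((M : ℝ) + 1) * M * ((M : ℝ) + 1) ^ M with hC
  have hC0 : 0 ≤ C := by positivity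
  -- the summand
  set t : ℝ → ℕ → ℝ := fun p k =>
    ((M + 2 + k - 1).factorial : ℝ) / (k.factorial : ℝ) * (1 / (Nr + 2 * k) ^ p) with ht
  -- rewrite the factorial ratio as an ascending factorial
  have hasc : ∀ k : ℕ, ((M + 2 + k - 1).factorial : ℝ) / (k.factorial : ℝ)
      = ((k + 1).ascFactorial (M + 1) : ℝ) := by
    intro k
    have h1 : M + 2 + k - 1 = k + (M + 1) := by omega
    rw [h1, ← Nat.factorial_mul_ascFactorial k (M + 1)]
    push_cast
    rw [mul_comm, mul_div_assoc, div_self (by positivity), mul_one]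
  have hasc_up : ∀ k : ℕ, ((k + 1).ascFactorial (M + 1) : ℝ) ≤ ((k : ℝ) + 1 + M) ^ (M + 1) := by
    intro k
    have h := Nat.ascFactorial_le_pow_add k (M + 1)
    calc ((k + 1).ascFactorial (M + 1) : ℝ) ≤ ((k + (M + 1)) ^ (M + 1) : ℕ) := by exact_mod_cast h
      _ = ((k : ℝ) + 1 + M) ^ (M + 1) := by push_cast; ring
  have hasc_lo : ∀ k : ℕ, ((k : ℝ) + 1) ^ (M + 1) ≤ ((k + 1).ascFactorial (M + 1) : ℝ) := by
    intro k
    have h := Nat.pow_succ_le_ascFactorial (k + 1) (M + 1)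
    calc ((k : ℝ) + 1) ^ (M + 1) = (((k + 1) ^ (M + 1) : ℕ) : ℝ) := by push_cast; ring
      _ ≤ _ := by exact_mod_cast h
  -- pointwise bounds, for p > Nr
  have hnn : ∀ p : ℝ, ∀ k : ℕ, 0 ≤ t p k := by
    intro p k
    rw [ht]
    have : (0:ℝ) < Nr + 2 * k := by rw [hNrv]; positivity
    positivity
  have h2p_le1 : ∀ p : ℝ, Nr < p → (2:ℝ) ^ (-p) ≤ 1 := by
    intro p hp
    exact Real.rpow_le_one_of_one_le_of_nonpos one_le_two
      (by rw [hNrv] at hp; nlinarith [Nat.cast_nonneg (α := ℝ) M])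
  have h2p_nn : ∀ p : ℝ, (0:ℝ) ≤ (2:ℝ) ^ (-p) := fun p => Real.rpow_nonneg (by norm_num) _
  have hupper : ∀ p : ℝ, Nr < p → ∀ k : ℕ,
      t p k ≤ 2 ^ (-p) * ((k : ℝ) + 1) ^ ((M : ℝ) + 1 - p) + C * (1 / ((k : ℝ) + 1) ^ 2) := by
    intro p hp k
    have hu : (1:ℝ) ≤ (k : ℝ) + 1 := by linarith [Nat.cast_nonneg (α := ℝ) k]
    have hu0 : (0:ℝ) < (k : ℝ) + 1 := by positivity
    have hpM : (M : ℝ) + 2 ≤ p := by rw [hNrv] at hp; linarith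
    have hp0 : 0 ≤ p := by nlinarith [Nat.cast_nonneg (α := ℝ) M]
    have h2u : (0:ℝ) < 2 * ((k : ℝ) + 1) := by positivity
    have hfrac : 1 / (Nr + 2 * k) ^ p ≤ 2 ^ (-p) * ((k : ℝ) + 1) ^ (-p) := by
      have hle : 2 * ((k : ℝ) + 1) ≤ Nr + 2 * k := by
        rw [hNrv]; nlinarith [Nat.cast_nonneg (α := ℝ) M]
      have h1 : (2 * ((k : ℝ) + 1)) ^ p ≤ (Nr + 2 * k) ^ p :=
        Real.rpow_le_rpow h2u.le hle hp0
      calc 1 / (Nr + 2 * k) ^ p ≤ 1 / (2 * ((k : ℝ) + 1)) ^ p :=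
            one_div_le_one_div_of_le (Real.rpow_pos_of_pos h2u p) h1
        _ = 2 ^ (-p) * ((k : ℝ) + 1) ^ (-p) := by
            rw [one_div, ← Real.rpow_neg h2u.le,
              Real.mul_rpow (by norm_num) hu0.le]
    have hbase : (0:ℝ) < Nr + 2 * k := by rw [hNrv]; positivity
    calc t p k = ((k + 1).ascFactorial (M + 1) : ℝ) * (1 / (Nr + 2 * k) ^ p) := by
          simp only [ht]; rw [hasc k]
      _ ≤ ((k : ℝ) + 1 + M) ^ (M + 1) * (2 ^ (-p) * ((k : ℝ) + 1) ^ (-p)) := by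
          apply mul_le_mul (hasc_up k) hfrac (by positivity) (by positivity)
      _ = 2 ^ (-p) * (((k : ℝ) + 1 + M) ^ (M + 1) * ((k : ℝ) + 1) ^ (-p)) := by ring
      _ ≤ 2 ^ (-p) * (((k : ℝ) + 1) ^ ((M : ℝ) + 1 - p)
            + ((M : ℝ) + 1) * M * ((M : ℝ) + 1) ^ M * (1 / ((k : ℝ) + 1) ^ 2)) := by
          exact mul_le_mul_of_nonneg_left (core_upper M hu hpM) (h2p_nn p)
      _ ≤ 2 ^ (-p) * ((k : ℝ) + 1) ^ ((M : ℝ) + 1 - p) + C * (1 / ((k : ℝ) + 1) ^ 2) := by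
          rw [hC]
          nlinarith [h2p_le1 p hp, h2p_nn p, Real.rpow_nonneg hu0.le ((M : ℝ) + 1 - p),
            mul_pos (mul_pos (by positivity : (0:ℝ) < (M:ℝ)+1) (by positivity : (0:ℝ) < 1)) hu0,
            (by positivity : (0:ℝ) ≤ ((M : ℝ) + 1) * M * ((M : ℝ) + 1) ^ M * (1 / ((k : ℝ) + 1) ^ 2))]
  have hlower : ∀ p : ℝ, Nr < p → ∀ k : ℕ,
      2 ^ (-p) * ((k : ℝ) + 1 + M) ^ ((M : ℝ) + 1 - p) - C * (1 / ((k : ℝ) + 1) ^ 2)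
        ≤ t p k := by
    intro p hp k
    have hu : (1:ℝ) ≤ (k : ℝ) + 1 := by linarith [Nat.cast_nonneg (α := ℝ) k]
    have hu0 : (0:ℝ) < (k : ℝ) + 1 := by positivity
    have hv0 : (0:ℝ) < (k : ℝ) + 1 + M := by positivity
    have hpM : (M : ℝ) + 2 ≤ p := by rw [hNrv] at hp; linarith
    have hp0 : 0 ≤ p := by nlinarith [Nat.cast_nonneg (α := ℝ) M]
    have h2v : (0:ℝ) < 2 * ((k : ℝ) + 1 + M) := by positivity
    have hbase : (0:ℝ) < Nr + 2 * k := by rw [hNrv]; positivity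
    have hfrac : 2 ^ (-p) * ((k : ℝ) + 1 + M) ^ (-p) ≤ 1 / (Nr + 2 * k) ^ p := by
      have hle : Nr + 2 * k ≤ 2 * ((k : ℝ) + 1 + M) := by
        rw [hNrv]; nlinarith [Nat.cast_nonneg (α := ℝ) M]
      have h1 : (Nr + 2 * k) ^ p ≤ (2 * ((k : ℝ) + 1 + M)) ^ p :=
        Real.rpow_le_rpow hbase.le hle hp0
      calc 2 ^ (-p) * ((k : ℝ) + 1 + M) ^ (-p)
          = 1 / (2 * ((k : ℝ) + 1 + M)) ^ p := by
            rw [one_div, ← Real.rpow_neg h2v.le,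
              Real.mul_rpow (by norm_num) hv0.le]
        _ ≤ 1 / (Nr + 2 * k) ^ p :=
            one_div_le_one_div_of_le (Real.rpow_pos_of_pos hbase p) h1
    calc 2 ^ (-p) * ((k : ℝ) + 1 + M) ^ ((M : ℝ) + 1 - p) - C * (1 / ((k : ℝ) + 1) ^ 2)
        ≤ 2 ^ (-p) * ((k : ℝ) + 1 + M) ^ ((M : ℝ) + 1 - p)
          - 2 ^ (-p) * (C * (1 / ((k : ℝ) + 1) ^ 2)) := by
          nlinarith [h2p_le1 p hp, h2p_nn p,
            (by positivity : (0:ℝ) ≤ C * (1 / ((k : ℝ) + 1) ^ 2))]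
      _ = 2 ^ (-p) * (((k : ℝ) + 1 + M) ^ ((M : ℝ) + 1 - p)
            - ((M : ℝ) + 1) * M * ((M : ℝ) + 1) ^ M * (1 / ((k : ℝ) + 1) ^ 2)) := by
          rw [hC]; ring
      _ ≤ 2 ^ (-p) * (((k : ℝ) + 1) ^ (M + 1) * ((k : ℝ) + 1 + M) ^ (-p)) :=
          mul_le_mul_of_nonneg_left (core_lower M hu hpM) (h2p_nn p)
      _ = ((k : ℝ) + 1) ^ (M + 1) * (2 ^ (-p) * ((k : ℝ) + 1 + M) ^ (-p)) := by ring
      _ ≤ ((k + 1).ascFactorial (M + 1) : ℝ) * (1 / (Nr + 2 * k) ^ p) := by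
          apply mul_le_mul (hasc_lo k) hfrac (by positivity) (by positivity)
      _ = t p k := by simp only [ht]; rw [hasc k]
  -- flip between 1/x^(p-Nr+1) and x^(M+1-p)
  have hflip : ∀ p : ℝ, ∀ x : ℝ, 0 < x → 1 / x ^ (p - Nr + 1) = x ^ ((M : ℝ) + 1 - p) := by
    intro p x hx
    rw [one_div, ← Real.rpow_neg hx.le]
    congr 1
    rw [hNrv]; ring
  -- summability of the zeta-type series
  have hsf : ∀ p : ℝ, Nr < p → Summable (fun n : ℕ => 1 / (n : ℝ) ^ (p - Nr + 1)) := by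
    intro p hp
    exact Real.summable_one_div_nat_rpow.mpr (by linarith)
  have hs1 : ∀ p : ℝ, Nr < p → Summable (fun k : ℕ => ((k : ℝ) + 1) ^ ((M : ℝ) + 1 - p)) := by
    intro p hp
    refine ((summable_nat_add_iff 1).2 (hsf p hp)).congr fun k => ?_
    push_cast
    exact hflip p _ (by positivity)
  have hs2 : ∀ p : ℝ, Nr < p →
      Summable (fun k : ℕ => ((k : ℝ) + 1 + M) ^ ((M : ℝ) + 1 - p)) := by
    intro p hp
    refine ((summable_nat_add_iff (M + 1)).2 (hsf p hp)).congr fun k => ?_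
    push_cast
    rw [show ((k : ℝ) + ((M : ℝ) + 1)) = (k : ℝ) + 1 + M by ring]
    exact hflip p _ (by positivity)
  have hKsum : Summable (fun k : ℕ => 1 / ((k : ℝ) + 1) ^ 2) := by
    refine ((summable_nat_add_iff 1).2
      (Real.summable_one_div_nat_pow.mpr (by norm_num : 1 < 2))).congr fun k => ?_
    push_cast
    ring
  set K : ℝ := ∑' k : ℕ, 1 / ((k : ℝ) + 1) ^ 2 with hK
  -- tsum identities with the standard zeta sum
  have hz1 : ∀ p : ℝ, Nr < p →
      (∑' k : ℕ, ((k : ℝ) + 1) ^ ((M : ℝ) + 1 - p))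
        = ∑' n : ℕ, 1 / (n : ℝ) ^ (p - Nr + 1) := by
    intro p hp
    rw [Summable.tsum_eq_zero_add (hsf p hp)]
    have h0 : 1 / ((0 : ℕ) : ℝ) ^ (p - Nr + 1) = 0 := by
      rw [Nat.cast_zero, Real.zero_rpow (by linarith : p - Nr + 1 ≠ 0), div_zero]
    rw [h0, zero_add]
    refine tsum_congr fun k => ?_
    rw [← hflip p _ (by positivity : (0:ℝ) < (k : ℝ) + 1)]
    push_cast
    ring_nf
  have hz2 : ∀ p : ℝ, Nr < p →
      (∑' k : ℕ, ((k : ℝ) + 1 + M) ^ ((M : ℝ) + 1 - p))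
        = (∑' n : ℕ, 1 / (n : ℝ) ^ (p - Nr + 1))
          - ∑ i ∈ Finset.range (M + 1), 1 / (i : ℝ) ^ (p - Nr + 1) := by
    intro p hp
    have h := Summable.sum_add_tsum_nat_add (f := fun n : ℕ => 1 / (n : ℝ) ^ (p - Nr + 1))
      (M + 1) (hsf p hp)
    rw [← h]
    have : (∑' k : ℕ, 1 / ((k + (M + 1) : ℕ) : ℝ) ^ (p - Nr + 1))
        = ∑' k : ℕ, ((k : ℝ) + 1 + M) ^ ((M : ℝ) + 1 - p) := by
      refine tsum_congr fun k => ?_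
      push_cast
      rw [show ((k : ℝ) + ((M : ℝ) + 1)) = (k : ℝ) + 1 + M by ring]
      exact hflip p _ (by positivity)
    rw [this]
    ring
  -- sum-level bounds
  have hub : ∀ p : ℝ, Nr < p →
      (∑' k : ℕ, t p k) ≤ 2 ^ (-p) * (∑' k : ℕ, ((k : ℝ) + 1) ^ ((M : ℝ) + 1 - p)) + C * K := by
    intro p hp
    have hg : Summable (fun k : ℕ =>
        2 ^ (-p) * ((k : ℝ) + 1) ^ ((M : ℝ) + 1 - p) + C * (1 / ((k : ℝ) + 1) ^ 2)) :=
      ((hs1 p hp).mul_left _).add (hKsum.mul_left C)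
    have hts : Summable (t p) :=
      Summable.of_nonneg_of_le (hnn p) (hupper p hp) hg
    calc (∑' k : ℕ, t p k)
        ≤ ∑' k : ℕ, (2 ^ (-p) * ((k : ℝ) + 1) ^ ((M : ℝ) + 1 - p)
            + C * (1 / ((k : ℝ) + 1) ^ 2)) := Summable.tsum_le_tsum (hupper p hp) hts hg
      _ = 2 ^ (-p) * (∑' k : ℕ, ((k : ℝ) + 1) ^ ((M : ℝ) + 1 - p)) + C * K := by
          rw [Summable.tsum_add ((hs1 p hp).mul_left _) (hKsum.mul_left C), tsum_mul_left,
            tsum_mul_left, hK]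
  have hlb : ∀ p : ℝ, Nr < p →
      2 ^ (-p) * (∑' k : ℕ, ((k : ℝ) + 1 + M) ^ ((M : ℝ) + 1 - p)) - C * K
        ≤ ∑' k : ℕ, t p k := by
    intro p hp
    have hgl : Summable (fun k : ℕ =>
        2 ^ (-p) * ((k : ℝ) + 1 + M) ^ ((M : ℝ) + 1 - p) - C * (1 / ((k : ℝ) + 1) ^ 2)) :=
      ((hs2 p hp).mul_left _).sub (hKsum.mul_left C)
    have hg : Summable (fun k : ℕ =>
        2 ^ (-p) * ((k : ℝ) + 1) ^ ((M : ℝ) + 1 - p) + C * (1 / ((k : ℝ) + 1) ^ 2)) :=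
      ((hs1 p hp).mul_left _).add (hKsum.mul_left C)
    have hts : Summable (t p) :=
      Summable.of_nonneg_of_le (hnn p) (hupper p hp) hg
    calc 2 ^ (-p) * (∑' k : ℕ, ((k : ℝ) + 1 + M) ^ ((M : ℝ) + 1 - p)) - C * K
        = ∑' k : ℕ, (2 ^ (-p) * ((k : ℝ) + 1 + M) ^ ((M : ℝ) + 1 - p)
            - C * (1 / ((k : ℝ) + 1) ^ 2)) := by
          rw [Summable.tsum_sub ((hs2 p hp).mul_left _) (hKsum.mul_left C), tsum_mul_left,
            tsum_mul_left, hK]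
      _ ≤ ∑' k : ℕ, t p k := Summable.tsum_le_tsum (hlower p hp) hgl hts
  -- limits
  have hmap : Tendsto (fun p : ℝ => p - Nr + 1) (𝓝[>] Nr) (𝓝[>] (1:ℝ)) := by
    have hc : Tendsto (fun p : ℝ => p - Nr + 1) (𝓝 Nr) (𝓝 1) := by
      have hcc : Continuous fun p : ℝ => p - Nr + 1 := by fun_prop
      have := hcc.tendsto Nr
      simpa using this
    refine tendsto_nhdsWithin_of_tendsto_nhds_of_eventually_within _
      (hc.mono_left nhdsWithin_le_nhds) ?_
    filter_upwards [self_mem_nhdsWithin] with p hp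
    simp only [Set.mem_Ioi] at hp ⊢
    linarith
  have hzeta : Tendsto (fun p : ℝ => (p - Nr) * ∑' n : ℕ, 1 / (n : ℝ) ^ (p - Nr + 1))
      (𝓝[>] Nr) (𝓝 1) := by
    have h := tendsto_sub_mul_tsum_nat_rpow.comp hmap
    refine h.congr fun p => ?_
    simp only [Function.comp_apply]
    rw [show p - Nr + 1 - 1 = p - Nr from by ring]
  have hpn : Tendsto (fun p : ℝ => p - Nr) (𝓝[>] Nr) (𝓝 0) := by
    have hcc : Continuous fun p : ℝ => p - Nr := by fun_prop
    have := (hcc.tendsto Nr).mono_left (nhdsWithin_le_nhds (s := Set.Ioi Nr))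
    simpa using this
  have h2p : Tendsto (fun p : ℝ => (2:ℝ) ^ (-p)) (𝓝[>] Nr) (𝓝 ((2:ℝ) ^ (-Nr))) := by
    have hcont : Continuous fun p : ℝ => (2:ℝ) ^ (-p) := by
      have h2 : ∀ q : ℝ, (2:ℝ) ^ (-q) = Real.exp (Real.log 2 * (-q)) := fun q =>
        Real.rpow_def_of_pos (by norm_num) _
      simp only [h2]
      exact Real.continuous_exp.comp (continuous_const.mul continuous_neg)
    exact (hcont.tendsto Nr).mono_left nhdsWithin_le_nhds
  have hFSb : ∀ p : ℝ, Nr < p →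
      (0:ℝ) ≤ (∑ i ∈ Finset.range (M + 1), 1 / (i : ℝ) ^ (p - Nr + 1)) ∧
      (∑ i ∈ Finset.range (M + 1), 1 / (i : ℝ) ^ (p - Nr + 1)) ≤ (M : ℝ) + 1 := by
    intro p hp
    refine ⟨Finset.sum_nonneg fun i _ => by positivity, ?_⟩
    calc (∑ i ∈ Finset.range (M + 1), 1 / (i : ℝ) ^ (p - Nr + 1))
        ≤ ∑ _i ∈ Finset.range (M + 1), (1:ℝ) := by
          refine Finset.sum_le_sum fun i _ => ?_
          rcases Nat.eq_zero_or_pos i with h | h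
          · subst h
            rw [Nat.cast_zero, Real.zero_rpow (by intro hcon; linarith), div_zero]
            norm_num
          · have h1 : (1:ℝ) ≤ (i : ℝ) := by exact_mod_cast h
            have h2 := Real.one_le_rpow h1 (by linarith : (0:ℝ) ≤ p - Nr + 1)
            rw [div_le_one (by linarith)]
            linarith
      _ = (M : ℝ) + 1 := by
          rw [Finset.sum_const, Finset.card_range, nsmul_eq_mul, mul_one]
          push_cast; ring
  have hFS0 : Tendsto (fun p : ℝ => (p - Nr) * ∑ i ∈ Finset.range (M + 1),
      1 / (i : ℝ) ^ (p - Nr + 1)) (𝓝[>] Nr) (𝓝 0) := by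
    refine squeeze_zero' ?_ ?_ (by simpa using hpn.mul_const ((M : ℝ) + 1))
    · filter_upwards [self_mem_nhdsWithin] with p hp
      have hp' : Nr < p := hp
      exact mul_nonneg (sub_nonneg.mpr hp'.le) (hFSb p hp').1
    · filter_upwards [self_mem_nhdsWithin] with p hp
      have hp' : Nr < p := hp
      exact mul_le_mul_of_nonneg_left (hFSb p hp').2 (sub_nonneg.mpr hp'.le)
  have hval : (2:ℝ) ^ (-Nr) = 1 / 2 ^ (M + 2) := by
    rw [Real.rpow_neg (by norm_num), hNr, Real.rpow_natCast, one_div]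
  have hloT : Tendsto (fun p : ℝ =>
      2 ^ (-p) * ((p - Nr) * (∑' n : ℕ, 1 / (n : ℝ) ^ (p - Nr + 1))
        - (p - Nr) * ∑ i ∈ Finset.range (M + 1), 1 / (i : ℝ) ^ (p - Nr + 1))
      - (p - Nr) * (C * K)) (𝓝[>] Nr) (𝓝 (1 / 2 ^ (M + 2))) := by
    have h := (h2p.mul (hzeta.sub hFS0)).sub (hpn.mul_const (C * K))
    have hv2 : (2:ℝ) ^ (-Nr) * (1 - 0) - 0 * (C * K) = 1 / 2 ^ (M + 2) := by
      rw [hval]; ring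
    rw [← hv2]
    exact h
  have hupT : Tendsto (fun p : ℝ =>
      2 ^ (-p) * ((p - Nr) * (∑' n : ℕ, 1 / (n : ℝ) ^ (p - Nr + 1)))
      + (p - Nr) * (C * K)) (𝓝[>] Nr) (𝓝 (1 / 2 ^ (M + 2))) := by
    have h := (h2p.mul hzeta).add (hpn.mul_const (C * K))
    have hv2 : (2:ℝ) ^ (-Nr) * 1 + 0 * (C * K) = 1 / 2 ^ (M + 2) := by
      rw [hval]; ring
    rw [← hv2]
    exact h
  show Tendsto (fun p : ℝ => (p - Nr) * ∑' k : ℕ, t p k) (𝓝[>] Nr) (𝓝 (1 / 2 ^ (M + 2)))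
  refine tendsto_of_tendsto_of_tendsto_of_le_of_le' hloT hupT ?_ ?_
  · filter_upwards [self_mem_nhdsWithin] with p hp
    have hp' : Nr < p := hp
    have hkey : 2 ^ (-p) * ((p - Nr) * (∑' n : ℕ, 1 / (n : ℝ) ^ (p - Nr + 1))
        - (p - Nr) * ∑ i ∈ Finset.range (M + 1), 1 / (i : ℝ) ^ (p - Nr + 1))
        - (p - Nr) * (C * K)
        = (p - Nr) * (2 ^ (-p) * ((∑' n : ℕ, 1 / (n : ℝ) ^ (p - Nr + 1))
            - ∑ i ∈ Finset.range (M + 1), 1 / (i : ℝ) ^ (p - Nr + 1)) - C * K) := by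
      ring
    rw [hkey, ← hz2 p hp']
    exact mul_le_mul_of_nonneg_left (hlb p hp') (sub_nonneg.mpr hp'.le)
  · filter_upwards [self_mem_nhdsWithin] with p hp
    have hp' : Nr < p := hp
    have hkey : 2 ^ (-p) * ((p - Nr) * (∑' n : ℕ, 1 / (n : ℝ) ^ (p - Nr + 1)))
        + (p - Nr) * (C * K)
        = (p - Nr) * (2 ^ (-p) * (∑' n : ℕ, 1 / (n : ℝ) ^ (p - Nr + 1)) + C * K) := by
      ring
    rw [hkey, ← hz1 p hp']
    exact mul_le_mul_of_nonneg_left (hub p hp') (sub_nonneg.mpr hp'.le)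
end

section
/- Let N ≥ 2, s ∈ (0,1), p = N/s. Define the Moser-type family u_ε(x) = |ln ε|^{(N-s)/N} for |x| ≤ ε, u_ε(x) = |ln|x|| / |ln ε|^{s/N} for ε < |x| < 1, u_ε(x) = 0 for |x| ≥ 1. Then the term I₁(ε) := (2/|ln ε|) ∫_ε^1 ∫₀^ε |ln r - ln ε|^p r^{N-1} t^{N-1} (r²+t²)/|r²-t²|^{N+1} dr dt satisfies lim_{ε→0⁺} I₁(ε) = 0. -/
open Real MeasureTheory Filter Topology Set


lemma logpow_le (p x : ℝ) (hp : 0 < p) (hx : 1 ≤ x) :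
    (Real.log x) ^ p ≤ (2*p)^p * x ^ ((1:ℝ)/2) := by
  have hx0 : 0 < x := lt_of_lt_of_le one_pos hx
  have h1 : Real.log x ≤ 2*p * x ^ (1/(2*p)) := by
    have h2 : Real.log (x ^ (1/(2*p))) = (1/(2*p)) * Real.log x := Real.log_rpow hx0 _
    have h3 : Real.log (x ^ (1/(2*p))) ≤ x ^ (1/(2*p)) := by
      have := Real.log_le_sub_one_of_pos (Real.rpow_pos_of_pos hx0 (1/(2*p)))
      linarith
    have hp' : (0:ℝ) < 2*p := by linarith
    rw [h2] at h3
    calc Real.log x = (2*p) * ((1/(2*p)) * Real.log x) := by field_simp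
      _ ≤ 2*p * x ^ (1/(2*p)) := by
          apply mul_le_mul_of_nonneg_left h3 (by linarith)
  calc (Real.log x)^p ≤ (2*p * x^(1/(2*p)))^p :=
        Real.rpow_le_rpow (Real.log_nonneg hx) h1 hp.le
    _ = (2*p)^p * x^((1:ℝ)/2) := by
        rw [Real.mul_rpow (by positivity) (Real.rpow_nonneg hx0.le _),
          ← Real.rpow_mul hx0.le]
        have hq : 1/(2*p)*p = 1/2 := by
          field_simp
        rw [hq]

lemma int_rpow_Ioo (c q : ℝ) (hc : 0 < c) (hq : -1 < q) :
    ∫ r in Set.Ioo (0:ℝ) c, r ^ q = c ^ (q+1) / (q+1) := by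
  rw [← MeasureTheory.integral_Ioc_eq_integral_Ioo,
    ← intervalIntegral.integral_of_le hc.le,
    integral_rpow (Or.inl hq)]
  rw [Real.zero_rpow (by linarith : q+1 ≠ 0)]
  ring

lemma int_sub_rpow_Ioo (c q : ℝ) (hc : 0 < c) (hq : -1 < q) :
    ∫ r in Set.Ioo (0:ℝ) c, (c - r) ^ q = c ^ (q+1) / (q+1) := by
  rw [← MeasureTheory.integral_Ioc_eq_integral_Ioo,
    ← intervalIntegral.integral_of_le hc.le]
  have := intervalIntegral.integral_comp_sub_left (a := 0) (b := c) (fun y => y ^ q) c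
  simp only [sub_self, sub_zero] at this
  rw [this, integral_rpow (Or.inl hq), Real.zero_rpow (by linarith : q+1 ≠ 0)]
  ring

lemma integrableOn_rpow_Ioo (c q : ℝ) (hc : 0 < c) (hq : -1 < q) :
    IntegrableOn (fun r : ℝ => r ^ q) (Set.Ioo 0 c) := by
  have h := intervalIntegral.intervalIntegrable_rpow' (a := 0) (b := c) hq
  rw [intervalIntegrable_iff_integrableOn_Ioo_of_le hc.le] at h
  exact h

lemma integrableOn_sub_rpow_Ioo (c q : ℝ) (hc : 0 < c) (hq : -1 < q) :
    IntegrableOn (fun r : ℝ => (c - r) ^ q) (Set.Ioo 0 c) := by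
  have h := (intervalIntegral.intervalIntegrable_rpow' (a := 0) (b := c) hq).comp_sub_left c
  simp only [sub_self, sub_zero] at h
  have h2 := h.symm
  rw [intervalIntegrable_iff_integrableOn_Ioo_of_le hc.le] at h2
  exact h2


noncomputable def integrand (N : ℕ) (p ε r t : ℝ) : ℝ :=
  |Real.log r - Real.log ε| ^ p * r ^ (N - 1) * t ^ (N - 1) * (r ^ 2 + t ^ 2)
    / |r ^ 2 - t ^ 2| ^ (N + 1)



lemma ptA (N : ℕ) (hN : 2 ≤ N) (p ε r t : ℝ) (hp0 : 0 < p)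
    (hε : 0 < ε) (hr0 : 0 < r) (hrε : 2*r ≤ ε) (hεt : ε < t) (ht1 : t < 1) :
    integrand N p ε r t
      ≤ 2^(N+2) * (2*p)^p * ε^((1:ℝ)/2) * r ^ ((N:ℝ) - 3/2) * ((t^(N+1) : ℝ))⁻¹ := by
  obtain ⟨M, rfl⟩ : ∃ M, N = M + 2 := ⟨N - 2, by omega⟩
  have hrε' : r < ε := by linarith
  have ht0 : 0 < t := hε.trans hεt
  have hrt : r < t := hrε'.trans hεt
  have hlog : |Real.log r - Real.log ε| = Real.log (ε/r) := by
    rw [abs_sub_comm, abs_of_nonneg (sub_nonneg.2 (Real.log_le_log hr0 hrε'.le)),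
      Real.log_div hε.ne' hr0.ne']
  have hpow : |Real.log r - Real.log ε| ^ p ≤ (2*p)^p * (ε/r) ^ ((1:ℝ)/2) := by
    rw [hlog]; exact logpow_le p _ hp0 ((one_le_div hr0).2 hrε'.le)
  have habs2 : |r^2 - t^2| ^ (M+2+1) = (t^2 - r^2)^(M+3) := by
    rw [abs_sub_comm, abs_of_nonneg (by nlinarith : (0:ℝ) ≤ t^2 - r^2)]
  have hDlb : (t^2/2)^(M+3) ≤ (t^2 - r^2)^(M+3) :=
    pow_le_pow_left₀ (by positivity) (by nlinarith) _
  have hNum : (0:ℝ) ≤ |Real.log r - Real.log ε| ^ p * r ^ (M+2 - 1) * t ^ (M+2 - 1) * (r ^ 2 + t ^ 2) := by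
    positivity
  have hr2 : ((ε/r)^((1:ℝ)/2)) * r^(M+1) = ε^((1:ℝ)/2) * r^((((M:ℕ)+2:ℕ):ℝ) - 3/2) := by
    rw [Real.div_rpow hε.le hr0.le, ← Real.rpow_natCast r (M+1), div_mul_eq_mul_div,
      mul_div_assoc, ← Real.rpow_sub hr0]
    congr 1
    push_cast
    ring
  have hM1 : M + 2 - 1 = M + 1 := by omega
  calc integrand (M+2) p ε r t
      = |Real.log r - Real.log ε| ^ p * r ^ (M+1) * t ^ (M+1) * (r ^ 2 + t ^ 2)
          / (t^2 - r^2)^(M+3) := by rw [integrand, habs2, hM1]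
    _ ≤ |Real.log r - Real.log ε| ^ p * r ^ (M+1) * t ^ (M+1) * (r ^ 2 + t ^ 2)
          / (t^2/2)^(M+3) := by
        apply div_le_div_of_nonneg_left (by positivity) (by positivity) hDlb
    _ ≤ ((2*p)^p * (ε/r) ^ ((1:ℝ)/2)) * r ^ (M+1) * t ^ (M+1) * (2*t^2)
          / (t^2/2)^(M+3) := by
        gcongr
        nlinarith [sq_nonneg (t-r), sq_nonneg (t+r)]
    _ = 2^(M+2+2) * (2*p)^p * ε^((1:ℝ)/2) * r ^ ((((M:ℕ)+2:ℕ):ℝ) - 3/2) * ((t^(M+2+1) : ℝ))⁻¹ := by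
        rw [show ((2*p)^p * (ε/r) ^ ((1:ℝ)/2)) * r ^ (M+1) = (2*p)^p * (((ε/r) ^ ((1:ℝ)/2)) * r^(M+1)) by ring, hr2]
        field_simp
        have h2M : ((1:ℝ)/2)^M * 2^M = 1 := by rw [← mul_pow]; norm_num
        linear_combination (-2 * t^6 * t^(M*2)) * h2M

lemma logB (ε r : ℝ) (hε : 0 < ε) (hr0 : 0 < r) (hrε' : r < ε) (hεr : ε ≤ 2*r) :
    |Real.log r - Real.log ε| ≤ 2/ε * (ε - r) := by
  have hlog : |Real.log r - Real.log ε| = Real.log (ε/r) := by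
    rw [abs_sub_comm, abs_of_nonneg (sub_nonneg.2 (Real.log_le_log hr0 hrε'.le)),
      Real.log_div hε.ne' hr0.ne']
  rw [hlog]
  have h1 : Real.log (ε/r) ≤ ε/r - 1 := Real.log_le_sub_one_of_pos (by positivity)
  have h2 : ε/r - 1 = (ε - r)/r := by field_simp
  have h3 : (ε - r)/r ≤ (ε - r)/(ε/2) := by
    apply div_le_div_of_nonneg_left (by linarith) (by linarith) (by linarith)
  calc Real.log (ε/r) ≤ (ε - r)/(ε/2) := by linarith
    _ = 2/ε * (ε - r) := by field_simp

lemma ptB1 (N : ℕ) (hN : 2 ≤ N) (p ε r t : ℝ) (hp0 : 0 < p)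
    (hε : 0 < ε) (hεr : ε ≤ 2*r) (hrε' : r < ε) (hεt : ε < t) (h2εt : 2*ε ≤ t) (ht1 : t < 1) :
    integrand N p ε r t
      ≤ 2^(N+2) * (2/ε)^p * (ε - r)^p * ε^(N-1) * ((t^(N+1) : ℝ))⁻¹ := by
  obtain ⟨M, rfl⟩ : ∃ M, N = M + 2 := ⟨N - 2, by omega⟩
  have hr0 : 0 < r := by linarith
  have ht0 : 0 < t := hε.trans hεt
  have hrt : r < t := hrε'.trans hεt
  have hb0 : (0:ℝ) < ε - r := by linarith
  have hpow : |Real.log r - Real.log ε| ^ p ≤ (2/ε)^p * (ε - r)^p := by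
    calc |Real.log r - Real.log ε| ^ p ≤ (2/ε * (ε - r))^p :=
          Real.rpow_le_rpow (abs_nonneg _) (logB ε r hε hr0 hrε' hεr) hp0.le
      _ = (2/ε)^p * (ε - r)^p := Real.mul_rpow (by positivity) (by linarith)
  have habs2 : |r^2 - t^2| ^ (M+2+1) = (t^2 - r^2)^(M+3) := by
    rw [abs_sub_comm, abs_of_nonneg (by nlinarith : (0:ℝ) ≤ t^2 - r^2)]
  have hDlb : (t^2/2)^(M+3) ≤ (t^2 - r^2)^(M+3) :=
    pow_le_pow_left₀ (by positivity) (by nlinarith) _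
  have hM1 : M + 2 - 1 = M + 1 := by omega
  calc integrand (M+2) p ε r t
      = |Real.log r - Real.log ε| ^ p * r ^ (M+1) * t ^ (M+1) * (r ^ 2 + t ^ 2)
          / (t^2 - r^2)^(M+3) := by rw [integrand, habs2, hM1]
    _ ≤ |Real.log r - Real.log ε| ^ p * r ^ (M+1) * t ^ (M+1) * (r ^ 2 + t ^ 2)
          / (t^2/2)^(M+3) := by
        apply div_le_div_of_nonneg_left (by positivity) (by positivity) hDlb
    _ ≤ ((2/ε)^p * (ε - r)^p) * ε ^ (M+1) * t ^ (M+1) * (2*t^2)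
          / (t^2/2)^(M+3) := by
        gcongr
        all_goals first
          | exact mul_nonneg (Real.rpow_nonneg (by positivity) _) (Real.rpow_nonneg hb0.le _)
          | exact hpow
          | exact hrε'.le
          | nlinarith [sq_nonneg (t-r), sq_nonneg (t+r)]
    _ = 2^(M+2+2) * (2/ε)^p * (ε - r)^p * ε^(M+2-1) * ((t^(M+2+1) : ℝ))⁻¹ := by
        rw [hM1]
        field_simp
        have h2M : ((1:ℝ)/2)^M * 2^M = 1 := by rw [← mul_pow]; norm_num
        linear_combination (-2 * t^6 * t^(M*2)) * h2M

set_option maxHeartbeats 1000000 in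
lemma ptB2 (N : ℕ) (hN : 2 ≤ N) (p ε r t : ℝ) (hp0 : 0 < p)
    (hε : 0 < ε) (hεr : ε ≤ 2*r) (hrε' : r < ε) (hεt : ε < t) :
    integrand N p ε r t
      ≤ 2 * (2/ε)^p * ε^(N-1) * (ε - r)^(p - (N:ℝ) - 1/2) * (t - ε)^(-(1/2):ℝ) := by
  obtain ⟨M, rfl⟩ : ∃ M, N = M + 2 := ⟨N - 2, by omega⟩
  have hr0 : 0 < r := by linarith
  have ht0 : 0 < t := hε.trans hεt
  have hrt : r < t := hrε'.trans hεt
  have ha0 : (0:ℝ) < t - ε := by linarith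
  have hb0 : (0:ℝ) < ε - r := by linarith
  set n : ℝ := ((M:ℝ) + 2) with hn
  have hpow : |Real.log r - Real.log ε| ^ p ≤ (2/ε)^p * (ε - r)^p := by
    calc |Real.log r - Real.log ε| ^ p ≤ (2/ε * (ε - r))^p :=
          Real.rpow_le_rpow (abs_nonneg _) (logB ε r hε hr0 hrε' hεr) hp0.le
      _ = (2/ε)^p * (ε - r)^p := Real.mul_rpow (by positivity) (by linarith)
  have habs2 : |r^2 - t^2| ^ (M+2+1) = (t^2 - r^2)^(M+3) := by
    rw [abs_sub_comm, abs_of_nonneg (by nlinarith : (0:ℝ) ≤ t^2 - r^2)]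
  -- AM-GM: (t-ε)^θ (ε-r)^(1-θ) ≤ t - r,  θ = 1/(2(n+1))
  have hn1 : (0:ℝ) < n + 1 := by positivity
  set θ : ℝ := 1/(2*(n+1)) with hθ
  have hθ0 : 0 < θ := by positivity
  have hθ1 : θ < 1 := by
    rw [hθ, div_lt_one (by positivity)]
    nlinarith [Nat.cast_nonneg (α := ℝ) M]
  have hgm : (t-ε)^θ * (ε-r)^(1-θ) ≤ t - r := by
    calc (t-ε)^θ * (ε-r)^(1-θ) ≤ θ*(t-ε) + (1-θ)*(ε-r) :=
          Real.geom_mean_le_arith_mean2_weighted hθ0.le (by linarith) ha0.le hb0.le (by ring)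
      _ ≤ t - r := by nlinarith
  have hkey : (t-ε)^((1:ℝ)/2) * (ε-r)^(n + 1/2) ≤ (t - r)^(M+3) := by
    have h1 : ((t-ε)^θ * (ε-r)^(1-θ))^(n+1) ≤ (t-r)^(n+1) :=
      Real.rpow_le_rpow (by positivity) hgm (by positivity)
    have h2 : ((t-ε)^θ * (ε-r)^(1-θ))^(n+1)
        = (t-ε)^(θ*(n+1)) * (ε-r)^((1-θ)*(n+1)) := by
      rw [Real.mul_rpow (by positivity) (by positivity), ← Real.rpow_mul ha0.le,
        ← Real.rpow_mul hb0.le]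
    have hθa : θ*(n+1) = 1/2 := by rw [hθ]; field_simp
    have hθb : (1-θ)*(n+1) = n + 1/2 := by rw [hθ]; field_simp; try ring
    have h3 : (t-r)^((n:ℝ)+1) = (t-r)^(M+3) := by
      rw [hn, show ((M:ℝ)+2)+1 = ((M+3 : ℕ):ℝ) by push_cast; ring, Real.rpow_natCast]
    rw [h2, hθa, hθb, h3] at h1
    exact h1
  have hD : t^(M+3) * ((t-ε)^((1:ℝ)/2) * (ε-r)^(n + 1/2)) ≤ (t^2 - r^2)^(M+3) := by
    calc t^(M+3) * ((t-ε)^((1:ℝ)/2) * (ε-r)^(n + 1/2))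
        ≤ t^(M+3) * (t-r)^(M+3) := by gcongr
      _ = (t*(t-r))^(M+3) := (mul_pow _ _ _).symm
      _ ≤ (t^2 - r^2)^(M+3) := by
          apply pow_le_pow_left₀ (by nlinarith : (0:ℝ) ≤ t*(t-r)) (by nlinarith) _
  have hM1 : M + 2 - 1 = M + 1 := by omega
  calc integrand (M+2) p ε r t
      = |Real.log r - Real.log ε| ^ p * r ^ (M+1) * t ^ (M+1) * (r ^ 2 + t ^ 2)
          / (t^2 - r^2)^(M+3) := by rw [integrand, habs2, hM1]
    _ ≤ |Real.log r - Real.log ε| ^ p * r ^ (M+1) * t ^ (M+1) * (r ^ 2 + t ^ 2)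
          / (t^(M+3) * ((t-ε)^((1:ℝ)/2) * (ε-r)^(n + 1/2))) := by
        apply div_le_div_of_nonneg_left (by positivity) (by positivity) hD
    _ ≤ ((2/ε)^p * (ε - r)^p) * ε ^ (M+1) * t ^ (M+1) * (2*t^2)
          / (t^(M+3) * ((t-ε)^((1:ℝ)/2) * (ε-r)^(n + 1/2))) := by
        gcongr
        all_goals first
          | exact mul_nonneg (Real.rpow_nonneg (by positivity) _) (Real.rpow_nonneg hb0.le _)
          | exact hpow
          | exact hrε'.le
          | nlinarith [sq_nonneg (t-r), sq_nonneg (t+r)]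
    _ = 2 * (2/ε)^p * ε^(M+2-1) * (ε - r)^(p - ((M+2:ℕ):ℝ) - 1/2) * (t - ε)^(-(1/2):ℝ) := by
        rw [hM1, Real.rpow_neg ha0.le,
          show p - ((M+2:ℕ):ℝ) - 1/2 = p - (n + 1/2) by rw [hn]; push_cast; ring,
          Real.rpow_sub hb0]
        have hT : (t-ε)^((1:ℝ)/2) ≠ 0 := ne_of_gt (Real.rpow_pos_of_pos ha0 _)
        have hC : (ε-r)^(n+1/2) ≠ 0 := ne_of_gt (Real.rpow_pos_of_pos hb0 _)
        have ht3 : (t:ℝ)^(M+3) ≠ 0 := by positivity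
        rw [div_eq_iff (by positivity)]
        field_simp
        ring
lemma integrand_nonneg (N : ℕ) (p ε r t : ℝ) (hr : 0 ≤ r) (ht : 0 ≤ t) :
    0 ≤ integrand N p ε r t := by
  rw [integrand]
  apply div_nonneg _ (pow_nonneg (abs_nonneg _) _)
  have h1 : (0:ℝ) ≤ |Real.log r - Real.log ε| ^ p := Real.rpow_nonneg (abs_nonneg _) _
  positivity








-- the inner integral bound, far case (2ε ≤ t)
lemma inner_far (N : ℕ) (hN : 2 ≤ N) (p ε t : ℝ) (hp : (N:ℝ) < p)
    (hε : 0 < ε) (hεt : ε < t) (h2εt : 2*ε ≤ t) (ht1 : t < 1) :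
    ∫ r in Set.Ioo (0:ℝ) ε, integrand N p ε r t
      ≤ (2^(N+2) * (2*p)^p + 2^(N+2) * 2^p) * ε^((N:ℝ)) * ((t^(N+1) : ℝ))⁻¹ := by
  have hN2 : (2:ℝ) ≤ (N:ℝ) := by exact_mod_cast hN
  have hp0 : 0 < p := by linarith
  have ht0 : 0 < t := hε.trans hεt
  have hinv : (0:ℝ) ≤ ((t^(N+1) : ℝ))⁻¹ := by positivity
  have h2ε : (0:ℝ) ≤ (2/ε)^p := Real.rpow_nonneg (div_nonneg (by norm_num) hε.le) _
  set c1 : ℝ := 2^(N+2) * (2*p)^p * ε^((1:ℝ)/2) * ((t^(N+1) : ℝ))⁻¹ with hc1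
  set c2 : ℝ := 2^(N+2) * (2/ε)^p * ε^(N-1) * ((t^(N+1) : ℝ))⁻¹ with hc2
  have hc1nn : 0 ≤ c1 := by
    apply mul_nonneg (mul_nonneg (mul_nonneg (by positivity) (by positivity)) _) hinv
    exact Real.rpow_nonneg hε.le _
  have hc2nn : 0 ≤ c2 := by
    apply mul_nonneg (mul_nonneg (mul_nonneg (by positivity) h2ε) (by positivity)) hinv
  have hq1 : (-1:ℝ) < (N:ℝ) - 3/2 := by linarith
  have hq2 : (-1:ℝ) < p := by linarith
  have hint1 : IntegrableOn (fun r : ℝ => c1 * r ^ ((N:ℝ)-3/2)) (Set.Ioo 0 ε) :=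
    (integrableOn_rpow_Ioo ε _ hε hq1).const_mul c1
  have hint2 : IntegrableOn (fun r : ℝ => c2 * (ε - r) ^ p) (Set.Ioo 0 ε) :=
    (integrableOn_sub_rpow_Ioo ε _ hε hq2).const_mul c2
  have hmaj : ∀ r ∈ Set.Ioo (0:ℝ) ε,
      integrand N p ε r t ≤ c1 * r ^ ((N:ℝ)-3/2) + c2 * (ε - r) ^ p := by
    intro r hr
    obtain ⟨hr0, hrε'⟩ := hr
    have hsub : (0:ℝ) ≤ (ε - r)^p := Real.rpow_nonneg (by linarith) _
    rcases le_or_gt (2*r) ε with hcase | hcase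
    · calc integrand N p ε r t
          ≤ 2^(N+2) * (2*p)^p * ε^((1:ℝ)/2) * r ^ ((N:ℝ) - 3/2) * ((t^(N+1) : ℝ))⁻¹ :=
            ptA N hN p ε r t hp0 hε hr0 hcase hεt ht1
        _ = c1 * r ^ ((N:ℝ)-3/2) := by rw [hc1]; ring
        _ ≤ _ := le_add_of_nonneg_right (mul_nonneg hc2nn hsub)
    · calc integrand N p ε r t
          ≤ 2^(N+2) * (2/ε)^p * (ε - r)^p * ε^(N-1) * ((t^(N+1) : ℝ))⁻¹ :=
            ptB1 N hN p ε r t hp0 hε hcase.le hrε' hεt h2εt ht1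
        _ = c2 * (ε - r)^p := by rw [hc2]; ring
        _ ≤ _ := le_add_of_nonneg_left (mul_nonneg hc1nn (Real.rpow_nonneg hr0.le _))
  have hle : ∫ r in Set.Ioo (0:ℝ) ε, integrand N p ε r t
      ≤ ∫ r in Set.Ioo (0:ℝ) ε, (c1 * r ^ ((N:ℝ)-3/2) + c2 * (ε - r) ^ p) := by
    apply integral_mono_of_nonneg
    · filter_upwards [ae_restrict_mem measurableSet_Ioo] with r hr
      exact integrand_nonneg N p ε r t hr.1.le ht0.le
    · exact hint1.add hint2
    · filter_upwards [ae_restrict_mem measurableSet_Ioo] with r hr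
      exact hmaj r hr
  rw [MeasureTheory.integral_add hint1 hint2, integral_const_mul,
    integral_const_mul, int_rpow_Ioo ε _ hε hq1, int_sub_rpow_Ioo ε _ hε hq2] at hle
  refine hle.trans ?_
  -- now bound the two explicit pieces
  have hεp : ε^p ≠ 0 := ne_of_gt (Real.rpow_pos_of_pos hε _)
  have he1 : ε^((1:ℝ)/2) * ε^((N:ℝ)-3/2+1) = ε^((N:ℝ)) := by
    rw [← Real.rpow_add hε]; congr 1; ring
  have he2 : (ε:ℝ)^(N-1) * (ε^(p+1) / ε^p) = ε^((N:ℝ)) := by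
    rw [← Real.rpow_natCast ε (N-1), ← Real.rpow_sub hε, ← Real.rpow_add hε]
    congr 1
    rw [Nat.cast_sub (by omega)]
    push_cast
    ring
  have hd1 : (1:ℝ) ≤ (N:ℝ) - 3/2 + 1 := by linarith
  have hd2 : (1:ℝ) ≤ p + 1 := by linarith
  have hb1 : c1 * (ε ^ ((N:ℝ)-3/2+1) / ((N:ℝ)-3/2+1)) ≤ 2^(N+2) * (2*p)^p * ε^((N:ℝ)) * ((t^(N+1) : ℝ))⁻¹ := by
    calc c1 * (ε ^ ((N:ℝ)-3/2+1) / ((N:ℝ)-3/2+1))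
        = (2^(N+2) * (2*p)^p * ε^((N:ℝ)) * ((t^(N+1) : ℝ))⁻¹) / ((N:ℝ)-3/2+1) := by
          rw [hc1, ← he1]; ring
      _ ≤ (2^(N+2) * (2*p)^p * ε^((N:ℝ)) * ((t^(N+1) : ℝ))⁻¹) / 1 := by
          apply div_le_div_of_nonneg_left ?_ one_pos hd1
          have : (0:ℝ) ≤ ε^((N:ℝ)) := Real.rpow_nonneg hε.le _
          positivity
      _ = _ := div_one _
  have hb2 : c2 * (ε ^ (p+1) / (p+1)) ≤ 2^(N+2) * 2^p * ε^((N:ℝ)) * ((t^(N+1) : ℝ))⁻¹ := by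
    have hdr : (2/ε)^p = 2^p / ε^p := Real.div_rpow (by norm_num : (0:ℝ) ≤ 2) hε.le _
    calc c2 * (ε ^ (p+1) / (p+1))
        = (2^(N+2) * 2^p * (ε^(N-1) * (ε^(p+1) / ε^p)) * ((t^(N+1) : ℝ))⁻¹) / (p+1) := by
          rw [hc2, hdr]; field_simp
      _ = (2^(N+2) * 2^p * ε^((N:ℝ)) * ((t^(N+1) : ℝ))⁻¹) / (p+1) := by rw [he2]
      _ ≤ (2^(N+2) * 2^p * ε^((N:ℝ)) * ((t^(N+1) : ℝ))⁻¹) / 1 := by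
          apply div_le_div_of_nonneg_left ?_ one_pos hd2
          have h2p : (0:ℝ) ≤ (2:ℝ)^p := Real.rpow_nonneg (by norm_num) _
          have : (0:ℝ) ≤ ε^((N:ℝ)) := Real.rpow_nonneg hε.le _
          positivity
      _ = _ := div_one _
  calc c1 * (ε ^ ((N:ℝ)-3/2+1) / ((N:ℝ)-3/2+1)) + c2 * (ε ^ (p+1) / (p+1))
      ≤ 2^(N+2) * (2*p)^p * ε^((N:ℝ)) * ((t^(N+1) : ℝ))⁻¹
        + 2^(N+2) * 2^p * ε^((N:ℝ)) * ((t^(N+1) : ℝ))⁻¹ := add_le_add hb1 hb2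
    _ = (2^(N+2) * (2*p)^p + 2^(N+2) * 2^p) * ε^((N:ℝ)) * ((t^(N+1) : ℝ))⁻¹ := by ring

lemma inner_near (N : ℕ) (hN : 2 ≤ N) (p ε t : ℝ) (hp : (N:ℝ) < p)
    (hε : 0 < ε) (hεt : ε < t) (ht1 : t < 1) :
    ∫ r in Set.Ioo (0:ℝ) ε, integrand N p ε r t
      ≤ 2^(N+2) * (2*p)^p * ε^((N:ℝ)) * ((t^(N+1) : ℝ))⁻¹
        + (2^(p+1)/(p - (N:ℝ) + 1/2)) * ε^(-(1/2):ℝ) * (t - ε)^(-(1/2):ℝ) := by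
  have hN2 : (2:ℝ) ≤ (N:ℝ) := by exact_mod_cast hN
  have hp0 : 0 < p := by linarith
  have ht0 : 0 < t := hε.trans hεt
  have ha0 : (0:ℝ) < t - ε := by linarith
  have hinv : (0:ℝ) ≤ ((t^(N+1) : ℝ))⁻¹ := by positivity
  have h2ε : (0:ℝ) ≤ (2/ε)^p := Real.rpow_nonneg (div_nonneg (by norm_num) hε.le) _
  have hta : (0:ℝ) ≤ (t-ε)^(-(1/2):ℝ) := Real.rpow_nonneg ha0.le _
  set q3 : ℝ := p - (N:ℝ) - 1/2 with hq3
  set c1 : ℝ := 2^(N+2) * (2*p)^p * ε^((1:ℝ)/2) * ((t^(N+1) : ℝ))⁻¹ with hc1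
  set c3 : ℝ := 2 * (2/ε)^p * ε^(N-1) * (t - ε)^(-(1/2):ℝ) with hc3
  have hc1nn : 0 ≤ c1 := by
    apply mul_nonneg (mul_nonneg (mul_nonneg (by positivity) (by positivity)) _) hinv
    exact Real.rpow_nonneg hε.le _
  have hc3nn : 0 ≤ c3 := by
    apply mul_nonneg (mul_nonneg (mul_nonneg (by positivity) h2ε) (by positivity)) hta
  have hq1 : (-1:ℝ) < (N:ℝ) - 3/2 := by linarith
  have hq2 : (-1:ℝ) < q3 := by rw [hq3]; linarith
  have hint1 : IntegrableOn (fun r : ℝ => c1 * r ^ ((N:ℝ)-3/2)) (Set.Ioo 0 ε) :=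
    (integrableOn_rpow_Ioo ε _ hε hq1).const_mul c1
  have hint2 : IntegrableOn (fun r : ℝ => c3 * (ε - r) ^ q3) (Set.Ioo 0 ε) :=
    (integrableOn_sub_rpow_Ioo ε _ hε hq2).const_mul c3
  have hle : ∫ r in Set.Ioo (0:ℝ) ε, integrand N p ε r t
      ≤ ∫ r in Set.Ioo (0:ℝ) ε, (c1 * r ^ ((N:ℝ)-3/2) + c3 * (ε - r) ^ q3) := by
    apply integral_mono_of_nonneg
    · filter_upwards [ae_restrict_mem measurableSet_Ioo] with r hr
      exact integrand_nonneg N p ε r t hr.1.le ht0.le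
    · exact hint1.add hint2
    · filter_upwards [ae_restrict_mem measurableSet_Ioo] with r hr
      obtain ⟨hr0, hrε'⟩ := hr
      have hsub : (0:ℝ) ≤ (ε - r)^q3 := Real.rpow_nonneg (by linarith) _
      rcases le_or_gt (2*r) ε with hcase | hcase
      · calc integrand N p ε r t
            ≤ 2^(N+2) * (2*p)^p * ε^((1:ℝ)/2) * r ^ ((N:ℝ) - 3/2) * ((t^(N+1) : ℝ))⁻¹ :=
              ptA N hN p ε r t hp0 hε hr0 hcase hεt ht1
          _ = c1 * r ^ ((N:ℝ)-3/2) := by rw [hc1]; ring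
          _ ≤ _ := le_add_of_nonneg_right (mul_nonneg hc3nn hsub)
      · calc integrand N p ε r t
            ≤ 2 * (2/ε)^p * ε^(N-1) * (ε - r)^(p - (N:ℝ) - 1/2) * (t - ε)^(-(1/2):ℝ) :=
              ptB2 N hN p ε r t hp0 hε hcase.le hrε' hεt
          _ = c3 * (ε - r)^q3 := by rw [hc3, hq3]; ring
          _ ≤ _ := le_add_of_nonneg_left (mul_nonneg hc1nn (Real.rpow_nonneg hr0.le _))
  rw [MeasureTheory.integral_add hint1 hint2, integral_const_mul,
    integral_const_mul, int_rpow_Ioo ε _ hε hq1, int_sub_rpow_Ioo ε _ hε hq2] at hle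
  refine hle.trans (add_le_add ?_ ?_)
  · -- first piece, as in inner_far
    have he1 : ε^((1:ℝ)/2) * ε^((N:ℝ)-3/2+1) = ε^((N:ℝ)) := by
      rw [← Real.rpow_add hε]; congr 1; ring
    have hd1 : (1:ℝ) ≤ (N:ℝ) - 3/2 + 1 := by linarith
    calc c1 * (ε ^ ((N:ℝ)-3/2+1) / ((N:ℝ)-3/2+1))
        = (2^(N+2) * (2*p)^p * ε^((N:ℝ)) * ((t^(N+1) : ℝ))⁻¹) / ((N:ℝ)-3/2+1) := by
          rw [hc1, ← he1]; ring
      _ ≤ (2^(N+2) * (2*p)^p * ε^((N:ℝ)) * ((t^(N+1) : ℝ))⁻¹) / 1 := by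
          apply div_le_div_of_nonneg_left ?_ one_pos hd1
          have : (0:ℝ) ≤ ε^((N:ℝ)) := Real.rpow_nonneg hε.le _
          positivity
      _ = _ := div_one _
  · -- second piece: equality up to ≤
    have hεp : ε^p ≠ 0 := ne_of_gt (Real.rpow_pos_of_pos hε _)
    have hdr : (2/ε)^p = 2^p / ε^p := Real.div_rpow (by norm_num : (0:ℝ) ≤ 2) hε.le _
    have hq31 : q3 + 1 = p - (N:ℝ) + 1/2 := by rw [hq3]; ring
    have hq31pos : (0:ℝ) < q3 + 1 := by rw [hq31]; linarith
    have he3 : (ε:ℝ)^(N-1) * (ε^(q3+1) / ε^p) = ε^(-(1/2):ℝ) := by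
      rw [← Real.rpow_natCast ε (N-1), ← Real.rpow_sub hε, ← Real.rpow_add hε]
      congr 1
      rw [Nat.cast_sub (by omega), hq31]
      push_cast
      ring
    calc c3 * (ε ^ (q3+1) / (q3+1))
        = (2^(p+1)/(q3+1)) * ((ε:ℝ)^(N-1) * (ε^(q3+1) / ε^p)) * (t - ε)^(-(1/2):ℝ) := by
          rw [hc3, hdr, Real.rpow_add (by norm_num : (0:ℝ) < 2), Real.rpow_one]
          field_simp
      _ = (2^(p+1)/(p - (N:ℝ) + 1/2)) * ε^(-(1/2):ℝ) * (t - ε)^(-(1/2):ℝ) := by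
          rw [he3, hq31]
      _ ≤ _ := le_rfl

lemma int_inv_pow (N : ℕ) (hN : 1 ≤ N) (ε : ℝ) (hε : 0 < ε) (hε1 : ε < 1) :
    ∫ t in Set.Ioo ε 1, ((t^(N+1) : ℝ))⁻¹ ≤ ε^(-(N:ℝ))/(N:ℝ) := by
  have hN1 : (1:ℝ) ≤ (N:ℝ) := by exact_mod_cast hN
  have hcongr : ∫ t in Set.Ioo ε 1, ((t^(N+1) : ℝ))⁻¹
      = ∫ t in Set.Ioo ε 1, t ^ (-((N:ℝ)+1)) := by
    apply MeasureTheory.setIntegral_congr_fun measurableSet_Ioo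
    intro t ht
    have ht0 : 0 < t := hε.trans ht.1
    show ((t^(N+1) : ℝ))⁻¹ = t ^ (-((N:ℝ)+1))
    rw [show -((N:ℝ)+1) = -(((N+1:ℕ)):ℝ) by push_cast; ring]
    rw [Real.rpow_neg ht0.le, Real.rpow_natCast]
  rw [hcongr, ← MeasureTheory.integral_Ioc_eq_integral_Ioo,
    ← intervalIntegral.integral_of_le hε1.le]
  rw [integral_rpow (Or.inr ⟨by intro h; rw [neg_eq_iff_eq_neg] at h; nlinarith,
    by rw [Set.uIcc_of_le hε1.le]; rintro ⟨h0, -⟩; linarith⟩)]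
  have h1 : -((N:ℝ)+1) + 1 = -(N:ℝ) := by ring
  rw [h1, Real.one_rpow]
  have hεn : (0:ℝ) < ε^(-(N:ℝ)) := Real.rpow_pos_of_pos hε _
  have hN0 : (0:ℝ) < (N:ℝ) := by linarith
  rw [show (1 - ε^(-(N:ℝ)))/(-(N:ℝ)) = (ε^(-(N:ℝ)) - 1)/(N:ℝ) by
    rw [div_eq_div_iff (by intro h; simp at h; linarith) hN0.ne']; ring]
  gcongr
  linarith

lemma int_ind (ε : ℝ) (hε : 0 < ε) :
    ∫ t in Set.Ioo ε (2*ε), (t - ε) ^ (-(1/2):ℝ) = 2 * ε^((1:ℝ)/2) := by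
  have h2ε : ε < 2*ε := by linarith
  rw [← MeasureTheory.integral_Ioc_eq_integral_Ioo, ← intervalIntegral.integral_of_le h2ε.le]
  have := intervalIntegral.integral_comp_sub_right (a := ε) (b := 2*ε)
    (fun y => y ^ (-(1/2):ℝ)) ε
  rw [this, show (2*ε - ε) = ε by ring, sub_self,
    integral_rpow (Or.inl (by norm_num : (-1:ℝ) < -(1/2))),
    Real.zero_rpow (by norm_num : (-(1/2):ℝ)+1 ≠ 0)]
  ring

lemma outer_bound (N : ℕ) (hN : 2 ≤ N) (p ε : ℝ) (hp : (N:ℝ) < p)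
    (hε : 0 < ε) (hε2 : ε < 1/2) :
    ∫ t in Set.Ioo ε 1, ∫ r in Set.Ioo (0:ℝ) ε, integrand N p ε r t
      ≤ (2^(N+2) * (2*p)^p + 2^(N+2) * 2^p) + 2 * (2^(p+1)/(p - (N:ℝ) + 1/2)) := by
  have hN2 : (2:ℝ) ≤ (N:ℝ) := by exact_mod_cast hN
  have hN1 : 1 ≤ N := by omega
  have hp0 : 0 < p := by linarith
  have hε1 : ε < 1 := by linarith
  have h2ε1 : 2*ε ≤ 1 := by linarith
  have h2p : (0:ℝ) ≤ (2:ℝ)^p := Real.rpow_nonneg (by norm_num) _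
  have h2pp : (0:ℝ) ≤ (2*p)^p := Real.rpow_nonneg (by linarith) _
  have h2p1 : (0:ℝ) ≤ (2:ℝ)^(p+1) := Real.rpow_nonneg (by norm_num) _
  set CA : ℝ := 2^(N+2) * (2*p)^p + 2^(N+2) * 2^p with hCA
  set K2 : ℝ := 2^(p+1)/(p - (N:ℝ) + 1/2) with hK2
  have hCAnn : 0 ≤ CA := by
    apply add_nonneg <;> apply mul_nonneg (by positivity)
    exacts [h2pp, h2p]
  have hK2nn : 0 ≤ K2 := div_nonneg h2p1 (by linarith)
  set φ : ℝ → ℝ := fun u => (u - ε)^(-(1/2):ℝ) with hφ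
  set G : ℝ → ℝ := fun t => CA * ε^((N:ℝ)) * ((t^(N+1):ℝ))⁻¹
      + (K2 * ε^(-(1/2):ℝ)) * Set.indicator (Set.Ioo ε (2*ε)) φ t with hG
  have hcont : IntegrableOn (fun t:ℝ => ((t^(N+1):ℝ))⁻¹) (Set.Ioo ε 1) := by
    have h : IntervalIntegrable (fun t:ℝ => ((t^(N+1):ℝ))⁻¹) volume ε 1 := by
      apply ContinuousOn.intervalIntegrable
      apply ContinuousOn.inv₀ (continuous_pow (N+1)).continuousOn
      intro x hx
      rw [Set.uIcc_of_le hε1.le] at hx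
      exact pow_ne_zero _ (by intro h0; rw [h0] at hx; exact absurd hx.1 (by linarith))
    rwa [intervalIntegrable_iff_integrableOn_Ioo_of_le hε1.le] at h
  have hbase : IntegrableOn φ (Set.Ioo ε (2*ε)) := by
    have h0 := intervalIntegral.intervalIntegrable_rpow' (a := 0) (b := ε)
      (by norm_num : (-1:ℝ) < -(1/2))
    have h1 := h0.comp_sub_right ε
    simp only [zero_add] at h1
    rw [intervalIntegrable_iff_integrableOn_Ioo_of_le (by linarith : ε ≤ ε + ε)] at h1
    rw [show 2*ε = ε + ε by ring]
    exact h1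
  have hind : IntegrableOn (Set.indicator (Set.Ioo ε (2*ε)) φ) (Set.Ioo ε 1) := by
    rw [IntegrableOn, integrable_indicator_iff measurableSet_Ioo, IntegrableOn,
      Measure.restrict_restrict measurableSet_Ioo]
    exact hbase.mono_set Set.inter_subset_left
  have hGint : IntegrableOn G (Set.Ioo ε 1) :=
    ((hcont.const_mul _).add (hind.const_mul _) : _)
  have hGle : ∀ t ∈ Set.Ioo ε 1, (∫ r in Set.Ioo (0:ℝ) ε, integrand N p ε r t) ≤ G t := by
    intro t ht
    have hindnn : 0 ≤ Set.indicator (Set.Ioo ε (2*ε)) φ t := by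
      apply Set.indicator_nonneg
      intro u hu
      exact Real.rpow_nonneg (by linarith [hu.1] : (0:ℝ) ≤ u - ε) _
    rcases le_or_gt (2*ε) t with hcase | hcase
    · calc (∫ r in Set.Ioo (0:ℝ) ε, integrand N p ε r t)
          ≤ CA * ε^((N:ℝ)) * ((t^(N+1):ℝ))⁻¹ :=
            inner_far N hN p ε t hp hε ht.1 hcase ht.2
        _ ≤ G t := le_add_of_nonneg_right
            (mul_nonneg (mul_nonneg hK2nn (Real.rpow_nonneg hε.le _)) hindnn)
    · calc (∫ r in Set.Ioo (0:ℝ) ε, integrand N p ε r t)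
          ≤ 2^(N+2) * (2*p)^p * ε^((N:ℝ)) * ((t^(N+1) : ℝ))⁻¹
              + (2^(p+1)/(p - (N:ℝ) + 1/2)) * ε^(-(1/2):ℝ) * (t - ε)^(-(1/2):ℝ) :=
            inner_near N hN p ε t hp hε ht.1 ht.2
        _ ≤ G t := by
            have ht0 : (0:ℝ) < t := lt_trans hε ht.1
            rw [hG]
            apply add_le_add
            · apply mul_le_mul_of_nonneg_right _ (inv_nonneg.2 (pow_nonneg ht0.le _))
              apply mul_le_mul_of_nonneg_right _ (Real.rpow_nonneg hε.le _)
              rw [hCA]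
              exact le_add_of_nonneg_right (mul_nonneg (by positivity) h2p)
            · have hmem : t ∈ Set.Ioo ε (2*ε) := ⟨ht.1, hcase⟩
              rw [Set.indicator_of_mem hmem]
              try rfl
              try (simp only [hφ, hK2]; exact le_of_eq (by ring))
  have hmono : (∫ t in Set.Ioo ε 1, ∫ r in Set.Ioo (0:ℝ) ε, integrand N p ε r t)
      ≤ ∫ t in Set.Ioo ε 1, G t := by
    apply integral_mono_of_nonneg
    · filter_upwards [ae_restrict_mem measurableSet_Ioo] with t ht
      apply MeasureTheory.setIntegral_nonneg measurableSet_Ioo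
      intro r hr
      exact integrand_nonneg N p ε r t hr.1.le (by linarith [ht.1] : (0:ℝ) ≤ t)
    · exact hGint
    · filter_upwards [ae_restrict_mem measurableSet_Ioo] with t ht
      exact hGle t ht
  refine hmono.trans ?_
  rw [hG, MeasureTheory.integral_add (hcont.const_mul _) (hind.const_mul _),
    integral_const_mul, integral_const_mul,
    MeasureTheory.setIntegral_indicator measurableSet_Ioo,
    Set.Ioo_inter_Ioo, max_self, min_eq_right h2ε1, int_ind ε hε]
  have hb1 : CA * ε^((N:ℝ)) * ∫ t in Set.Ioo ε 1, ((t^(N+1):ℝ))⁻¹ ≤ CA := by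
    have h1 : CA * ε^((N:ℝ)) * ∫ t in Set.Ioo ε 1, ((t^(N+1):ℝ))⁻¹
        ≤ CA * ε^((N:ℝ)) * (ε^(-(N:ℝ))/(N:ℝ)) := by
      apply mul_le_mul_of_nonneg_left (int_inv_pow N hN1 ε hε hε1)
      exact mul_nonneg hCAnn (Real.rpow_nonneg hε.le _)
    refine h1.trans ?_
    rw [show CA * ε^((N:ℝ)) * (ε^(-(N:ℝ))/(N:ℝ)) = CA * (ε^((N:ℝ)) * ε^(-(N:ℝ))) / (N:ℝ) by ring,
      ← Real.rpow_add hε]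
    simp only [add_neg_cancel, Real.rpow_zero, mul_one]
    exact div_le_self hCAnn (by linarith)
  have hb2 : (K2 * ε^(-(1/2):ℝ)) * (2 * ε^((1:ℝ)/2)) = 2 * K2 := by
    rw [show (K2 * ε^(-(1/2):ℝ)) * (2 * ε^((1:ℝ)/2)) = 2 * K2 * (ε^(-(1/2):ℝ) * ε^((1:ℝ)/2)) by ring,
      ← Real.rpow_add hε]
    norm_num
  rw [hb2]
  exact add_le_add hb1 le_rfl


/-- For the Moser-type family, the term
`I₁(ε) = (2/|ln ε|) ∫_ε^1 ∫_0^ε |ln r - ln ε|^p r^(N-1) t^(N-1) (r²+t²)/|r²-t²|^(N+1) dr dt`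
tends to `0` as `ε → 0⁺`, where `p = N/s`, `s ∈ (0,1)`, `N ≥ 2`. -/
theorem stmt12 (N : ℕ) (hN : 2 ≤ N) (s : ℝ) (hs : s ∈ Set.Ioo (0 : ℝ) 1)
    (p : ℝ) (hp : p = (N : ℝ) / s) :
    Tendsto (fun ε : ℝ => (2 / |Real.log ε|) *
        ∫ t in Set.Ioo ε 1, ∫ r in Set.Ioo (0 : ℝ) ε,
          |Real.log r - Real.log ε| ^ p * r ^ (N - 1) * t ^ (N - 1)
            * (r ^ 2 + t ^ 2) / |r ^ 2 - t ^ 2| ^ (N + 1))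
      (nhdsWithin 0 (Set.Ioi 0)) (nhds 0) := by
  obtain ⟨hs0, hs1⟩ := hs
  have hN2 : (2:ℝ) ≤ (N:ℝ) := by exact_mod_cast hN
  have hpN : (N:ℝ) < p := by
    rw [hp, lt_div_iff₀ hs0]; nlinarith
  have hp0 : 0 < p := by linarith
  set C : ℝ := (2^(N+2) * (2*p)^p + 2^(N+2) * 2^p) + 2 * (2^(p+1)/(p - (N:ℝ) + 1/2)) with hC
  have hCnn : 0 ≤ C := by
    rw [hC]
    have h2p : (0:ℝ) ≤ (2:ℝ)^p := Real.rpow_nonneg (by norm_num) _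
    have h2pp : (0:ℝ) ≤ (2*p)^p := Real.rpow_nonneg (by linarith) _
    have h2p1 : (0:ℝ) ≤ (2:ℝ)^(p+1) := Real.rpow_nonneg (by norm_num) _
    have : (0:ℝ) ≤ 2^(p+1)/(p - (N:ℝ) + 1/2) := div_nonneg h2p1 (by linarith)
    have h1 : (0:ℝ) ≤ 2^(N+2) * (2*p)^p := mul_nonneg (by positivity) h2pp
    have h2 : (0:ℝ) ≤ 2^(N+2) * (2:ℝ)^p := mul_nonneg (by positivity) h2p
    linarith
  have hev : ∀ᶠ ε in nhdsWithin (0:ℝ) (Set.Ioi 0), ε ∈ Set.Ioo (0:ℝ) (1/2) :=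
    Ioo_mem_nhdsGT (by norm_num)
  apply squeeze_zero' (g := fun ε : ℝ => 2 * C / |Real.log ε|)
  · filter_upwards [hev] with ε hε
    apply mul_nonneg (div_nonneg (by norm_num) (abs_nonneg _))
    apply MeasureTheory.setIntegral_nonneg measurableSet_Ioo
    intro t ht
    apply MeasureTheory.setIntegral_nonneg measurableSet_Ioo
    intro r hr
    exact integrand_nonneg N p ε r t hr.1.le (le_trans hε.1.le ht.1.le)
  · filter_upwards [hev] with ε hε
    have hout := outer_bound N hN p ε hpN hε.1 hε.2
    have hJ : (∫ t in Set.Ioo ε 1, ∫ r in Set.Ioo (0 : ℝ) ε,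
        |Real.log r - Real.log ε| ^ p * r ^ (N - 1) * t ^ (N - 1)
          * (r ^ 2 + t ^ 2) / |r ^ 2 - t ^ 2| ^ (N + 1)) ≤ C := by
      rw [hC]
      exact hout
    calc (2 / |Real.log ε|) *
        ∫ t in Set.Ioo ε 1, ∫ r in Set.Ioo (0 : ℝ) ε,
          |Real.log r - Real.log ε| ^ p * r ^ (N - 1) * t ^ (N - 1)
            * (r ^ 2 + t ^ 2) / |r ^ 2 - t ^ 2| ^ (N + 1)
        ≤ (2 / |Real.log ε|) * C := by
          apply mul_le_mul_of_nonneg_left hJ (div_nonneg (by norm_num) (abs_nonneg _))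
      _ = 2 * C / |Real.log ε| := by ring
  · have h1 : Tendsto (fun ε:ℝ => |Real.log ε|) (nhdsWithin 0 (Set.Ioi 0)) atTop :=
      tendsto_abs_atBot_atTop.comp Real.tendsto_log_nhdsGT_zero
    exact Tendsto.div_atTop tendsto_const_nhds h1
end

section
/- Let N ≥ 2, p > N, and define I₃(ε) := 2|ln ε|^{p-1} ∫₁^∞ ∫₀^ε r^{N-1} t^{N-1} (r²+t²)/|r²-t²|^{N+1} dr dt = (2 ε^N |ln ε|^{p-1}/N) ∫₁^∞ r^{N-1}/(r²-ε²)^N dr. Then lim_{ε→0⁺} I₃(ε) = 0. -/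
open Real MeasureTheory Filter Topology

lemma inner_eq (m : ℕ) (ε t : ℝ) (hε : 0 < ε) (hε1 : ε < 1) (ht : 1 < t) :
    (∫ r in Set.Ioo (0 : ℝ) ε,
        r ^ m * t ^ m * (r ^ 2 + t ^ 2) / |r ^ 2 - t ^ 2| ^ (m + 2))
    = (ε ^ (m+1) / (m+1)) * (t ^ m / (t ^ 2 - ε ^ 2) ^ (m+1)) := by
  have habs : ∀ r ∈ Set.Ioo (0:ℝ) ε,
      r ^ m * t ^ m * (r ^ 2 + t ^ 2) / |r ^ 2 - t ^ 2| ^ (m + 2)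
      = r ^ m * t ^ m * (r ^ 2 + t ^ 2) / (t ^ 2 - r ^ 2) ^ (m + 2) := by
    intro r hr
    have h1 : r ^ 2 < t ^ 2 := by nlinarith [hr.1, hr.2]
    rw [abs_sub_comm, abs_of_pos (by linarith)]
  rw [setIntegral_congr_fun measurableSet_Ioo habs,
    setIntegral_congr_set Ioo_ae_eq_Ioc,
    ← intervalIntegral.integral_of_le hε.le]
  have hne : ∀ x ∈ Set.uIcc (0:ℝ) ε, t ^ 2 - x ^ 2 ≠ 0 := by
    intro x hx
    rw [Set.uIcc_of_le hε.le] at hx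
    have : x ^ 2 < t ^ 2 := by nlinarith [hx.1, hx.2]
    linarith
  rw [intervalIntegral.integral_eq_sub_of_hasDerivAt
    (f := fun r => (t ^ m / (m+1)) * (r ^ (m+1) * ((t ^ 2 - r ^ 2) ^ (m+1))⁻¹)) ?_ ?_]
  · have h0 : t ^ 2 - ε ^ 2 ≠ 0 := hne ε (by simp [Set.uIcc_of_le hε.le, hε.le])
    field_simp
    ring
  · intro x hx
    have h0 : t ^ 2 - x ^ 2 ≠ 0 := hne x hx
    have h1 : HasDerivAt (fun r : ℝ => r ^ (m+1)) ((m+1) * x ^ m) x := by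
      simpa using hasDerivAt_pow (m+1) x
    have h2 : HasDerivAt (fun r : ℝ => t ^ 2 - r ^ 2) (-(2 * x)) x := by
      simpa using (hasDerivAt_pow 2 x).const_sub (t ^ 2)
    have h3 : HasDerivAt (fun r : ℝ => (t ^ 2 - r ^ 2) ^ (m+1))
        ((m+1) * (t ^ 2 - x ^ 2) ^ m * (-(2 * x))) x := by
      simpa using h2.fun_pow (m+1)
    have h4 := h3.fun_inv (pow_ne_zero _ h0)
    have h5 := (h1.fun_mul h4).const_mul (t ^ m / (m+1))
    convert h5 using 1
    · rfl
    have hm1 : ((m:ℝ)+1) ≠ 0 := by positivity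
    field_simp
    ring
  · apply ContinuousOn.intervalIntegrable
    apply ContinuousOn.div
    · fun_prop
    · fun_prop
    · intro x hx
      exact pow_ne_zero _ (hne x hx)


/-- For `N ≥ 2`, `p > N`, the term
`I₃(ε) = 2|ln ε|^(p-1) ∫₁^∞ ∫₀^ε r^(N-1) t^(N-1)(r²+t²)/|r²-t²|^(N+1) dr dt`
equals `(2 ε^N |ln ε|^(p-1)/N) ∫₁^∞ r^(N-1)/(r²-ε²)^N dr` and tends to `0` as `ε → 0⁺`. -/
theorem stmt14 (N : ℕ) (hN : 2 ≤ N) (p : ℝ) (hp : (N : ℝ) < p) :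
    (∀ ε ∈ Set.Ioo (0 : ℝ) 1,
      2 * |Real.log ε| ^ (p - 1) *
        ∫ t in Set.Ioi (1 : ℝ), ∫ r in Set.Ioo (0 : ℝ) ε,
          r ^ (N - 1) * t ^ (N - 1) * (r ^ 2 + t ^ 2) / |r ^ 2 - t ^ 2| ^ (N + 1)
      = (2 * ε ^ N * |Real.log ε| ^ (p - 1) / N) *
          ∫ r in Set.Ioi (1 : ℝ), r ^ (N - 1) / (r ^ 2 - ε ^ 2) ^ N) ∧
    Tendsto (fun ε : ℝ => 2 * |Real.log ε| ^ (p - 1) *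
        ∫ t in Set.Ioi (1 : ℝ), ∫ r in Set.Ioo (0 : ℝ) ε,
          r ^ (N - 1) * t ^ (N - 1) * (r ^ 2 + t ^ 2) / |r ^ 2 - t ^ 2| ^ (N + 1))
      (nhdsWithin 0 (Set.Ioi 0)) (nhds 0) := by
  obtain ⟨m, rfl⟩ : ∃ m, N = m + 1 := ⟨N - 1, by omega⟩
  have hmn : m + 1 - 1 = m := rfl
  have hNR : ((m:ℝ) + 1) ≠ 0 := by positivity
  -- Part 1
  have part1 : ∀ ε ∈ Set.Ioo (0 : ℝ) 1,
      2 * |Real.log ε| ^ (p - 1) *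
        ∫ t in Set.Ioi (1 : ℝ), ∫ r in Set.Ioo (0 : ℝ) ε,
          r ^ (m + 1 - 1) * t ^ (m + 1 - 1) * (r ^ 2 + t ^ 2) / |r ^ 2 - t ^ 2| ^ (m + 1 + 1)
      = (2 * ε ^ (m + 1) * |Real.log ε| ^ (p - 1) / (m + 1 : ℕ)) *
          ∫ r in Set.Ioi (1 : ℝ), r ^ (m + 1 - 1) / (r ^ 2 - ε ^ 2) ^ (m + 1) := by
    intro ε hε
    rw [setIntegral_congr_fun (f := fun t => ∫ r in Set.Ioo (0 : ℝ) ε,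
          r ^ (m + 1 - 1) * t ^ (m + 1 - 1) * (r ^ 2 + t ^ 2) / |r ^ 2 - t ^ 2| ^ (m + 1 + 1))
        measurableSet_Ioi
        (fun t ht => inner_eq m ε t hε.1 hε.2 ht)]
    rw [show (fun t : ℝ => (ε ^ (m+1) / (m+1)) * (t ^ m / (t ^ 2 - ε ^ 2) ^ (m+1)))
        = fun t : ℝ => (ε ^ (m+1) / (m+1)) * (t ^ m / (t ^ 2 - ε ^ 2) ^ (m+1)) from rfl,
      MeasureTheory.integral_const_mul]
    push_cast
    ring
  refine ⟨part1, ?_⟩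
  -- the bounding constant
  set C : ℝ := ∫ r in Set.Ioi (1:ℝ), (4/3:ℝ) ^ (m+1) * ((r ^ (m+2))⁻¹) with hC
  have hCint : IntegrableOn (fun r : ℝ => (4/3:ℝ) ^ (m+1) * ((r ^ (m+2))⁻¹)) (Set.Ioi 1) := by
    have h := integrableOn_Ioi_rpow_of_lt (a := -((m:ℝ)+2)) (by push_cast; linarith [m.cast_nonneg (α := ℝ)]) (c := 1) one_pos
    have h2 : IntegrableOn (fun r : ℝ => (r ^ (m+2))⁻¹) (Set.Ioi 1) := by
      apply h.congr_fun ?_ measurableSet_Ioi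
      intro x hx
      have hx0 : (0:ℝ) < x := lt_trans one_pos hx
      show x ^ (-((m:ℝ)+2)) = (x ^ (m+2))⁻¹
      rw [show (-((m:ℝ)+2)) = -((m+2 : ℕ) : ℝ) by push_cast; ring,
        Real.rpow_neg hx0.le, Real.rpow_natCast]
    exact h2.const_mul _
  have hJnonneg : ∀ ε ∈ Set.Ioo (0:ℝ) 1,
      0 ≤ ∫ r in Set.Ioi (1 : ℝ), r ^ m / (r ^ 2 - ε ^ 2) ^ (m + 1) := by
    intro ε hε
    apply setIntegral_nonneg measurableSet_Ioi
    intro r hr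
    have hr1 : 1 < r := hr
    have : 0 < r ^ 2 - ε ^ 2 := by nlinarith [hε.1, hε.2]
    positivity
  have hp1 : (0:ℝ) < p - 1 := by
    push_cast at hp
    have := m.cast_nonneg (α := ℝ)
    linarith
  have hJle : ∀ ε ∈ Set.Ioo (0:ℝ) (1/2:ℝ),
      (∫ r in Set.Ioi (1:ℝ), r ^ m / (r ^ 2 - ε ^ 2) ^ (m+1)) ≤ C := by
    intro ε hε
    rw [hC]
    apply integral_mono_of_nonneg ?_ hCint ?_
    · filter_upwards [ae_restrict_mem measurableSet_Ioi] with r hr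
      have hr1 : 1 < (r:ℝ) := hr
      have : 0 < r ^ 2 - ε ^ 2 := by nlinarith [hε.1, hε.2]
      positivity
    · filter_upwards [ae_restrict_mem measurableSet_Ioi] with r hr
      have hr1 : 1 < (r:ℝ) := hr
      have hr0 : (0:ℝ) < r := lt_trans one_pos hr1
      have h1 : (3/4:ℝ) * r ^ 2 ≤ r ^ 2 - ε ^ 2 := by nlinarith [hε.1, hε.2]
      have h2 : ((3/4:ℝ) * r ^ 2) ^ (m+1) ≤ (r ^ 2 - ε ^ 2) ^ (m+1) :=
        pow_le_pow_left₀ (by positivity) h1 _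
      have h3 : r ^ m / (r ^ 2 - ε ^ 2) ^ (m+1) ≤ r ^ m / ((3/4:ℝ) * r ^ 2) ^ (m+1) :=
        div_le_div_of_nonneg_left (by positivity) (by positivity) h2
      refine h3.trans_eq ?_
      rw [mul_pow, show ((r:ℝ) ^ 2) ^ (m+1) = r ^ (m + (m+2)) from by
        rw [← pow_mul]; congr 1; ring, pow_add]
      field_simp
      have hab : (3/4:ℝ)^m * (4/3)^m = 1 := by rw [← mul_pow]; norm_num
      linear_combination (-(r ^ 2 * r ^ (m * 2) * 4)) * hab
  have hC0 : 0 ≤ C :=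
    le_trans (hJnonneg (1/4) ⟨by norm_num, by norm_num⟩) (hJle (1/4) ⟨by norm_num, by norm_num⟩)
  set q : ℝ := ((m:ℝ)+1)/(p-1) with hqdef
  have hq : 0 < q := div_pos (by positivity) hp1
  have h0 := tendsto_log_mul_rpow_nhdsGT_zero hq
  have h1 : Tendsto (fun x : ℝ => |Real.log x| * x ^ q) (𝓝[>](0:ℝ)) (𝓝 0) := by
    have h0' := h0.abs
    rw [abs_zero] at h0'
    apply h0'.congr'
    filter_upwards [self_mem_nhdsWithin] with x hx
    rw [abs_mul, abs_of_nonneg (Real.rpow_nonneg (le_of_lt hx) _)]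
  have h2 : Tendsto (fun y : ℝ => y ^ (p-1)) (𝓝 (0:ℝ)) (𝓝 0) := by
    have := (continuousAt_rpow_const 0 (p-1) (Or.inr hp1.le)).tendsto
    simpa [Real.zero_rpow (ne_of_gt hp1)] using this
  have h4 : Tendsto (fun x : ℝ => |Real.log x| ^ (p-1) * x ^ (m+1)) (𝓝[>](0:ℝ)) (𝓝 0) := by
    apply (h2.comp h1).congr'
    filter_upwards [self_mem_nhdsWithin] with x hx
    show (|Real.log x| * x ^ q) ^ (p-1) = |Real.log x| ^ (p-1) * x ^ (m+1)
    have hq2 : q * (p-1) = ((m+1:ℕ):ℝ) := by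
      rw [hqdef]
      push_cast
      field_simp
    rw [Real.mul_rpow (abs_nonneg _) (Real.rpow_nonneg hx.le _),
      ← Real.rpow_natCast x (m+1), ← Real.rpow_mul hx.le, hq2]
  have hg : Tendsto (fun ε : ℝ => (2*C/((m:ℝ)+1)) * (|Real.log ε| ^ (p-1) * ε ^ (m+1)))
      (𝓝[>](0:ℝ)) (𝓝 0) := by
    have := h4.const_mul (2*C/((m:ℝ)+1))
    simpa using this
  have hmem : Set.Ioo (0:ℝ) (1/2) ∈ 𝓝[>](0:ℝ) :=
    Ioo_mem_nhdsGT_of_mem (Set.mem_Ico.mpr ⟨le_refl (0:ℝ), by norm_num⟩)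
  apply squeeze_zero' ?_ ?_ hg
  · filter_upwards [hmem] with ε hε
    have hε1 : ε ∈ Set.Ioo (0:ℝ) 1 := ⟨hε.1, by linarith [hε.2]⟩
    rw [part1 ε hε1]
    have hJ := hJnonneg ε hε1
    have h5 : 0 ≤ 2 * ε ^ (m+1) * |Real.log ε| ^ (p-1) / ((m+1:ℕ):ℝ) := by
      apply div_nonneg _ (Nat.cast_nonneg _)
      exact mul_nonneg (mul_nonneg (by norm_num) (pow_nonneg hε.1.le _))
        (Real.rpow_nonneg (abs_nonneg _) _)
    exact mul_nonneg h5 hJ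
  · filter_upwards [hmem] with ε hε
    have hε1 : ε ∈ Set.Ioo (0:ℝ) 1 := ⟨hε.1, by linarith [hε.2]⟩
    rw [part1 ε hε1]
    have hJ := hJle ε hε
    have h5 : 0 ≤ 2 * ε ^ (m+1) * |Real.log ε| ^ (p-1) / ((m+1:ℕ):ℝ) := by
      apply div_nonneg _ (Nat.cast_nonneg _)
      exact mul_nonneg (mul_nonneg (by norm_num) (pow_nonneg hε.1.le _))
        (Real.rpow_nonneg (abs_nonneg _) _)
    calc 2 * ε ^ (m+1) * |Real.log ε| ^ (p-1) / ((m+1:ℕ):ℝ) *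
          ∫ r in Set.Ioi (1:ℝ), r ^ (m+1-1) / (r ^ 2 - ε ^ 2) ^ (m+1)
        ≤ 2 * ε ^ (m+1) * |Real.log ε| ^ (p-1) / ((m+1:ℕ):ℝ) * C :=
          mul_le_mul_of_nonneg_left hJ h5
      _ = (2*C/((m:ℝ)+1)) * (|Real.log ε| ^ (p-1) * ε ^ (m+1)) := by
          push_cast
          ring
end

section
/- Let γ_{s,N} := 2(Nω_N)² Γ(p+1)/N! · Σ_{k=0}^∞ (N+k-1)!/k! · 1/(N+2k)^p with p = N/s, where ω_N = π^{N/2}/Γ(N/2+1). Then lim_{s→1⁻} (1-s) γ_{s,N} = N ω_N² / 2^{N-1}. -/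
open Real Filter Topology Finset

lemma S16fact_prod (k m : ℕ) :
    ((k + m).factorial : ℝ) = (k.factorial : ℝ) * ∏ j ∈ Finset.range m, ((k : ℝ) + 1 + j) := by
  induction m with
  | zero => simp
  | succ m ih =>
    have h : k + (m + 1) = (k + m) + 1 := by omega
    rw [h, Nat.factorial_succ, Finset.prod_range_succ, ← mul_assoc, ← ih]
    push_cast; ring

lemma S16prod_lb (k m : ℕ) :
    ((k : ℝ) + 1) ^ m ≤ ∏ j ∈ Finset.range m, ((k : ℝ) + 1 + j) := by
  calc ((k : ℝ) + 1) ^ m = ∏ _j ∈ Finset.range m, ((k : ℝ) + 1) := by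
        rw [Finset.prod_const, Finset.card_range]
    _ ≤ _ := by
        refine Finset.prod_le_prod (fun j _ => by positivity) (fun j _ => by { have : (0:ℝ) ≤ j := Nat.cast_nonneg j; linarith })

lemma S16prod_ub (k m : ℕ) :
    ∏ j ∈ Finset.range m, ((k : ℝ) + 1 + j) ≤ ((k : ℝ) + m) ^ m := by
  calc ∏ j ∈ Finset.range m, ((k : ℝ) + 1 + j)
      ≤ ∏ _j ∈ Finset.range m, ((k : ℝ) + m) := by
        refine Finset.prod_le_prod (fun j _ => by positivity) (fun j hj => ?_)
        have : (j : ℝ) + 1 ≤ m := by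
          exact_mod_cast Nat.succ_le_of_lt (Finset.mem_range.mp hj)
        linarith
    _ = _ := by rw [Finset.prod_const, Finset.card_range]



noncomputable def S16aT (N : ℕ) (p : ℝ) (k : ℕ) : ℝ :=
  ((N + k - 1).factorial : ℝ) / (k.factorial : ℝ) * (1 / ((N : ℝ) + 2 * k) ^ p)

noncomputable def S16tT (N : ℕ) (p : ℝ) (k : ℕ) : ℝ :=
  ((k : ℝ) + 1) ^ (N - 1) * (1 / (2 * ((k : ℝ) + 1)) ^ p)

noncomputable def S16Cv (m K : ℕ) : ℝ := (((K : ℝ) + m) / ((K : ℝ) + 1)) ^ m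
noncomputable def S16cv (N K : ℕ) : ℝ := ((2 * (K : ℝ) + 2) / (2 * (K : ℝ) + N)) ^ (N + 1)

lemma S16b_eq {N : ℕ} (hN : 2 ≤ N) (k : ℕ) :
    ((N + k - 1).factorial : ℝ) / (k.factorial : ℝ)
      = ∏ j ∈ Finset.range (N - 1), ((k : ℝ) + 1 + j) := by
  have h : N + k - 1 = k + (N - 1) := by omega
  rw [h, S16fact_prod]
  rw [mul_div_assoc]
  field_simp

lemma S16b_lb {N : ℕ} (hN : 2 ≤ N) (k : ℕ) :
    ((k : ℝ) + 1) ^ (N - 1) ≤ ((N + k - 1).factorial : ℝ) / (k.factorial : ℝ) := by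
  rw [S16b_eq hN]; exact S16prod_lb k (N - 1)

lemma S16b_ub {N : ℕ} (hN : 2 ≤ N) (k : ℕ) :
    ((N + k - 1).factorial : ℝ) / (k.factorial : ℝ) ≤ ((k : ℝ) + (N - 1 : ℕ)) ^ (N - 1) := by
  rw [S16b_eq hN]; exact S16prod_ub k (N - 1)

lemma S16Cv_nonneg (m K : ℕ) : (0:ℝ) ≤ S16Cv m K := by
  unfold S16Cv; positivity

lemma S16Cv_ratio {m K k : ℕ} (hm : 1 ≤ m) (hk : K ≤ k) :
    ((k : ℝ) + m) ^ m ≤ S16Cv m K * ((k : ℝ) + 1) ^ m := by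
  have hk' : (K : ℝ) ≤ k := by exact_mod_cast hk
  have h1 : (0:ℝ) < (k:ℝ) + 1 := by positivity
  have h2 : (0:ℝ) < (K:ℝ) + 1 := by positivity
  have hratio : ((k : ℝ) + m) / ((k : ℝ) + 1) ≤ ((K : ℝ) + m) / ((K : ℝ) + 1) := by
    rw [div_le_div_iff₀ h1 h2]
    have hm1 : (1:ℝ) ≤ m := by exact_mod_cast hm
    nlinarith
  have : ((k : ℝ) + m) ^ m = (((k : ℝ) + m) / ((k : ℝ) + 1)) ^ m * ((k : ℝ) + 1) ^ m := by
    rw [← mul_pow, div_mul_cancel₀]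
    exact ne_of_gt h1
  rw [this, S16Cv]
  apply mul_le_mul_of_nonneg_right _ (by positivity)
  apply pow_le_pow_left₀ (by positivity) hratio

lemma S16aT_ub {N : ℕ} (hN : 2 ≤ N) {p : ℝ} (hp : 0 ≤ p) {K k : ℕ} (hk : K ≤ k) :
    S16aT N p k ≤ S16Cv (N - 1) K * S16tT N p k := by
  have hNc : (2:ℝ) ≤ N := by exact_mod_cast hN
  have h2k : (0:ℝ) < 2 * ((k:ℝ) + 1) := by positivity
  have hNk : (0:ℝ) < (N:ℝ) + 2 * k := by positivity
  have hinv : 1 / ((N : ℝ) + 2 * k) ^ p ≤ 1 / (2 * ((k : ℝ) + 1)) ^ p := by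
    apply one_div_le_one_div_of_le (rpow_pos_of_pos h2k p)
    apply rpow_le_rpow (le_of_lt h2k) (by linarith) hp
  have hb := S16b_ub hN k
  have hbk : ((k : ℝ) + (N - 1 : ℕ)) ^ (N - 1) ≤ S16Cv (N - 1) K * ((k : ℝ) + 1) ^ (N - 1) :=
    S16Cv_ratio (by omega) hk
  have hbnn : (0:ℝ) ≤ ((N + k - 1).factorial : ℝ) / (k.factorial : ℝ) := by positivity
  have hinn : (0:ℝ) ≤ 1 / (2 * ((k : ℝ) + 1)) ^ p := by positivity
  calc S16aT N p k ≤ (S16Cv (N - 1) K * ((k : ℝ) + 1) ^ (N - 1)) * (1 / (2 * ((k : ℝ) + 1)) ^ p) := by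
        apply mul_le_mul (hb.trans hbk) hinv (by positivity)
        exact mul_nonneg (S16Cv_nonneg _ _) (by positivity)
    _ = S16Cv (N - 1) K * S16tT N p k := by rw [S16tT]; ring

lemma S16cv_nonneg (N K : ℕ) : (0:ℝ) ≤ S16cv N K := by unfold S16cv; positivity

lemma S16cv_le_one {N K : ℕ} (hN : 2 ≤ N) : S16cv N K ≤ 1 := by
  have hNc : (2:ℝ) ≤ N := by exact_mod_cast hN
  apply pow_le_one₀ (by positivity)
  rw [div_le_one (by positivity)]; linarith

lemma S16aT_lb {N : ℕ} (hN : 2 ≤ N) {p : ℝ} (hp0 : 0 ≤ p) (hp1 : p ≤ (N:ℝ) + 1)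
    {K k : ℕ} (hk : K ≤ k) :
    S16cv N K * S16tT N p k ≤ S16aT N p k := by
  have hNc : (2:ℝ) ≤ N := by exact_mod_cast hN
  have hk' : (K : ℝ) ≤ k := by exact_mod_cast hk
  have h2k : (0:ℝ) < 2 * ((k:ℝ) + 1) := by positivity
  have hNk : (0:ℝ) < (N:ℝ) + 2 * k := by positivity
  -- S16key : S16cv N K * (1 / (2(k+1))^p) ≤ 1 / (N+2k)^p
  have hx0 : (0:ℝ) < (2 * (k:ℝ) + 2) / (2 * (k:ℝ) + N) := by positivity
  have hx1 : (2 * (k:ℝ) + 2) / (2 * (k:ℝ) + N) ≤ 1 := by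
    rw [div_le_one (by positivity)]; linarith
  have hxp : ((2 * (k:ℝ) + 2) / (2 * (k:ℝ) + N)) ^ ((N:ℝ) + 1)
      ≤ ((2 * (k:ℝ) + 2) / (2 * (k:ℝ) + N)) ^ p :=
    rpow_le_rpow_of_exponent_ge hx0 hx1 hp1
  have hnat : ((2 * (k:ℝ) + 2) / (2 * (k:ℝ) + N)) ^ ((N:ℝ) + 1)
      = ((2 * (k:ℝ) + 2) / (2 * (k:ℝ) + N)) ^ (N + 1 : ℕ) := by
    rw [← rpow_natCast]; push_cast; ring_nf
  have hmono : S16cv N K ≤ ((2 * (k:ℝ) + 2) / (2 * (k:ℝ) + N)) ^ (N + 1 : ℕ) := by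
    apply pow_le_pow_left₀ (by positivity)
    rw [div_le_div_iff₀ (by positivity) (by positivity)]
    nlinarith
  have hkey : S16cv N K ≤ ((2 * (k:ℝ) + 2) / (2 * (k:ℝ) + N)) ^ p := by
    rw [← hnat] at hmono; exact hmono.trans hxp
  have hrpow : ((2 * (k:ℝ) + 2) / (2 * (k:ℝ) + N)) ^ p
      = (2 * ((k:ℝ) + 1)) ^ p / ((N:ℝ) + 2 * k) ^ p := by
    rw [div_rpow (by positivity) (by positivity)]
    ring_nf
  have hinv : S16cv N K * (1 / (2 * ((k:ℝ) + 1)) ^ p) ≤ 1 / ((N:ℝ) + 2 * k) ^ p := by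
    rw [hrpow] at hkey
    rw [mul_one_div, div_le_div_iff₀ (rpow_pos_of_pos h2k p) (rpow_pos_of_pos hNk p)]
    rw [le_div_iff₀ (rpow_pos_of_pos hNk p)] at hkey
    linarith
  have hb := S16b_lb hN k
  have : S16cv N K * S16tT N p k = ((k:ℝ) + 1) ^ (N - 1) * (S16cv N K * (1 / (2 * ((k:ℝ) + 1)) ^ p)) := by
    rw [S16tT]; ring
  rw [this, S16aT]
  apply mul_le_mul hb hinv (mul_nonneg (S16cv_nonneg _ _) (by positivity)) (by positivity)


lemma S16tT_eq {N : ℕ} (hN : 1 ≤ N) (p : ℝ) (k : ℕ) :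
    S16tT N p k = (1 / (2:ℝ) ^ p) * (1 / ((k:ℝ) + 1) ^ (p - N + 1)) := by
  have hA : (0:ℝ) < (k:ℝ) + 1 := by positivity
  have h1 : ((k:ℝ) + 1) ^ (N - 1) = ((k:ℝ) + 1) ^ ((N:ℝ) - 1) := by
    rw [← rpow_natCast ((k:ℝ) + 1) (N - 1)]
    congr 1
    push_cast [Nat.cast_sub hN]
    ring
  have h2 : (2 * ((k:ℝ) + 1)) ^ p = (2:ℝ) ^ p * ((k:ℝ) + 1) ^ p :=
    mul_rpow (by norm_num) (le_of_lt hA)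
  rw [S16tT, h1, h2]
  rw [one_div, mul_inv, ← one_div ((2:ℝ)^p), ← one_div (((k:ℝ)+1)^p)]
  have h3 : ((k:ℝ) + 1) ^ ((N:ℝ) - 1) * (1 / ((k:ℝ) + 1) ^ p)
      = 1 / ((k:ℝ) + 1) ^ (p - N + 1) := by
    rw [one_div, one_div, ← rpow_neg (le_of_lt hA), ← rpow_add hA, ← rpow_neg (le_of_lt hA)]
    congr 1; ring
  calc ((k:ℝ) + 1) ^ ((N:ℝ) - 1) * (1 / (2:ℝ) ^ p * (1 / ((k:ℝ) + 1) ^ p))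
      = (1 / (2:ℝ) ^ p) * (((k:ℝ) + 1) ^ ((N:ℝ) - 1) * (1 / ((k:ℝ) + 1) ^ p)) := by ring
    _ = _ := by rw [h3]

lemma S16summable_shift {q : ℝ} (hq : 1 < q) :
    Summable (fun k : ℕ => 1 / ((k:ℝ) + 1) ^ q) := by
  have h := Real.summable_one_div_nat_rpow.mpr hq
  have h2 := (summable_nat_add_iff 1).mpr h
  refine h2.congr fun n => ?_
  push_cast
  ring_nf

lemma S16summable_tT {N : ℕ} (hN : 1 ≤ N) {p : ℝ} (hp : (N:ℝ) < p) : Summable (S16tT N p) := by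
  have hq : 1 < p - N + 1 := by linarith
  have := (S16summable_shift hq).mul_left (1 / (2:ℝ) ^ p)
  exact this.congr fun k => (S16tT_eq hN p k).symm

lemma S16zres : Tendsto (fun q : ℝ => (q - 1) * ∑' n : ℕ, 1 / ((n:ℝ) + 1) ^ q)
    (𝓝[>] (1:ℝ)) (𝓝 1) := by
  apply tendsto_sub_mul_tsum_nat_rpow.congr'
  filter_upwards [self_mem_nhdsWithin] with q hq
  have hq1 : (1:ℝ) < q := hq
  congr 1
  rw [Summable.tsum_eq_zero_add (Real.summable_one_div_nat_rpow.mpr hq1)]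
  rw [show ((0:ℕ):ℝ) = (0:ℝ) by norm_num, Real.zero_rpow (by linarith : q ≠ 0)]
  simp only [div_zero, zero_add]
  refine tsum_congr fun n => ?_
  push_cast
  ring_nf

lemma S16tendsto_sub_self (N : ℕ) : Tendsto (fun p : ℝ => p - N) (𝓝[>] (N:ℝ)) (𝓝 0) := by
  have : Tendsto (fun p : ℝ => p - N) (𝓝 (N:ℝ)) (𝓝 ((N:ℝ) - N)) :=
    (continuous_id.sub continuous_const).tendsto _
  rw [sub_self] at this
  exact this.mono_left nhdsWithin_le_nhds

lemma S16cont_aT {N : ℕ} (hN : 1 ≤ N) (k : ℕ) (q : ℝ) : ContinuousAt (fun p => S16aT N p k) q := by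
  have h1 : (1:ℝ) ≤ (N:ℝ) := by exact_mod_cast hN
  have h2 : (0:ℝ) ≤ 2 * (k:ℝ) := by positivity
  have hb0 : (0:ℝ) < (N:ℝ) + 2 * k := by linarith
  exact continuousAt_const.mul
    (continuousAt_const.div (Real.continuousAt_const_rpow (ne_of_gt hb0))
      (ne_of_gt (rpow_pos_of_pos hb0 q)))

lemma S16cont_tT (N k : ℕ) (q : ℝ) : ContinuousAt (fun p => S16tT N p k) q := by
  have hb : (2 * ((k:ℝ) + 1)) ≠ 0 := by positivity
  exact continuousAt_const.mul
    (continuousAt_const.div (Real.continuousAt_const_rpow hb)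
      (ne_of_gt (rpow_pos_of_pos (by positivity) q)))

lemma S16tendsto_mul_partial_aT {N : ℕ} (hN : 1 ≤ N) (K : ℕ) :
    Tendsto (fun p : ℝ => (p - N) * ∑ k ∈ Finset.range K, S16aT N p k) (𝓝[>] (N:ℝ)) (𝓝 0) := by
  have hc : ContinuousAt (fun p : ℝ => ∑ k ∈ Finset.range K, S16aT N p k) (N:ℝ) :=
    tendsto_finset_sum _ fun k _ => S16cont_aT hN k _
  have := (S16tendsto_sub_self N).mul (hc.tendsto.mono_left nhdsWithin_le_nhds)
  rwa [zero_mul] at this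

lemma S16tendsto_mul_partial_tT (N K : ℕ) :
    Tendsto (fun p : ℝ => (p - N) * ∑ k ∈ Finset.range K, S16tT N p k) (𝓝[>] (N:ℝ)) (𝓝 0) := by
  have hc : ContinuousAt (fun p : ℝ => ∑ k ∈ Finset.range K, S16tT N p k) (N:ℝ) :=
    tendsto_finset_sum _ fun k _ => S16cont_tT N k _
  have := (S16tendsto_sub_self N).mul (hc.tendsto.mono_left nhdsWithin_le_nhds)
  rwa [zero_mul] at this

lemma S16tendsto_T {N : ℕ} (hN : 1 ≤ N) :
    Tendsto (fun p : ℝ => (p - N) * ∑' k, S16tT N p k) (𝓝[>] (N:ℝ)) (𝓝 (1 / 2 ^ N)) := by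
  have hmap : Tendsto (fun p : ℝ => p - N + 1) (𝓝[>] (N:ℝ)) (𝓝[>] (1:ℝ)) := by
    rw [tendsto_nhdsWithin_iff]
    constructor
    · have : Tendsto (fun p : ℝ => p - N + 1) (𝓝 (N:ℝ)) (𝓝 ((N:ℝ) - N + 1)) :=
        ((continuous_id.sub continuous_const).add continuous_const).tendsto _
      rw [sub_self, zero_add] at this
      exact this.mono_left nhdsWithin_le_nhds
    · filter_upwards [self_mem_nhdsWithin] with p hp
      have : (N:ℝ) < p := hp
      simp only [Set.mem_Ioi]; linarith
  have h1 : Tendsto (fun p : ℝ => (p - N + 1 - 1) * ∑' n : ℕ, 1 / ((n:ℝ) + 1) ^ (p - N + 1))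
      (𝓝[>] (N:ℝ)) (𝓝 1) := S16zres.comp hmap
  have h2 : Tendsto (fun p : ℝ => 1 / (2:ℝ) ^ p) (𝓝[>] (N:ℝ)) (𝓝 (1 / 2 ^ N)) := by
    have hc : ContinuousAt (fun p : ℝ => 1 / (2:ℝ) ^ p) ((N:ℝ)) :=
      continuousAt_const.div (Real.continuousAt_const_rpow two_ne_zero)
        (ne_of_gt (rpow_pos_of_pos two_pos _))
    have := hc.tendsto.mono_left (nhdsWithin_le_nhds (a := (N:ℝ)) (s := Set.Ioi (N:ℝ)))
    rwa [Real.rpow_natCast] at this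
  have := h2.mul h1
  rw [mul_one] at this
  apply this.congr'
  filter_upwards [self_mem_nhdsWithin] with p hp
  have hp' : (N:ℝ) < p := hp
  have : ∑' k, S16tT N p k = (1 / (2:ℝ) ^ p) * ∑' n : ℕ, 1 / ((n:ℝ) + 1) ^ (p - N + 1) := by
    rw [← tsum_mul_left]
    exact tsum_congr fun k => S16tT_eq hN p k
  rw [this]; ring

lemma S16tendsto_tail_T {N : ℕ} (hN : 1 ≤ N) (K : ℕ) :
    Tendsto (fun p : ℝ => (p - N) * ∑' k, S16tT N p (k + K)) (𝓝[>] (N:ℝ)) (𝓝 (1 / 2 ^ N)) := by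
  have := (S16tendsto_T hN).sub (S16tendsto_mul_partial_tT N K)
  rw [sub_zero] at this
  apply this.congr'
  filter_upwards [self_mem_nhdsWithin] with p hp
  have hp' : (N:ℝ) < p := hp
  have hsum := S16summable_tT hN hp'
  have h := Summable.sum_add_tsum_nat_add' (f := S16tT N p) (k := K) ((summable_nat_add_iff K).mpr hsum)
  nlinarith [h]


lemma S16Cv_ge_one {m : ℕ} (hm : 1 ≤ m) (K : ℕ) : 1 ≤ S16Cv m K := by
  apply one_le_pow₀
  rw [le_div_iff₀ (by positivity)]
  have : (1:ℝ) ≤ m := by exact_mod_cast hm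
  linarith

lemma S16summable_aT {N : ℕ} (hN : 2 ≤ N) {p : ℝ} (hp : (N:ℝ) < p) : Summable (S16aT N p) := by
  have hN0 : (0:ℝ) ≤ (N:ℝ) := Nat.cast_nonneg N
  have hp0 : 0 ≤ p := le_of_lt (lt_of_le_of_lt hN0 hp)
  apply Summable.of_nonneg_of_le (fun k => by unfold S16aT; positivity)
    (fun k => S16aT_ub hN hp0 (Nat.zero_le k))
  exact (S16summable_tT (by omega) hp).mul_left _

lemma S16tendsto_Cv (m : ℕ) : Tendsto (fun K : ℕ => S16Cv m K) atTop (𝓝 1) := by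
  unfold S16Cv
  have h1 : Tendsto (fun K : ℕ => (K:ℝ) + 1) atTop atTop :=
    tendsto_atTop_add_const_right _ _ tendsto_natCast_atTop_atTop
  have h0 : Tendsto (fun K : ℕ => ((m:ℝ) - 1) / ((K:ℝ) + 1)) atTop (𝓝 0) :=
    h1.const_div_atTop _
  have hr : Tendsto (fun K : ℕ => ((K:ℝ) + m) / ((K:ℝ) + 1)) atTop (𝓝 1) := by
    have h2 := h0.const_add 1
    rw [add_zero] at h2
    apply h2.congr fun K => ?_
    have hK : ((K:ℝ) + 1) ≠ 0 := by positivity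
    field_simp
    ring
  have h3 := hr.pow m
  rwa [one_pow] at h3

lemma S16tendsto_cv (N : ℕ) : Tendsto (fun K : ℕ => S16cv N K) atTop (𝓝 1) := by
  unfold S16cv
  have h1 : Tendsto (fun K : ℕ => 2 * (K:ℝ) + N) atTop atTop :=
    tendsto_atTop_add_const_right _ _
      (tendsto_natCast_atTop_atTop.const_mul_atTop two_pos)
  have h0 : Tendsto (fun K : ℕ => ((2:ℝ) - N) / (2 * (K:ℝ) + N)) atTop (𝓝 0) :=
    h1.const_div_atTop _
  have hr : Tendsto (fun K : ℕ => (2 * (K:ℝ) + 2) / (2 * (K:ℝ) + N)) atTop (𝓝 1) := by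
    have h2 := h0.const_add 1
    rw [add_zero] at h2
    apply h2.congr' ?_
    filter_upwards [eventually_gt_atTop 0] with K hK
    have hK' : (1:ℝ) ≤ (K:ℝ) := by exact_mod_cast hK
    have hd : (2 * (K:ℝ) + N) ≠ 0 := by positivity
    field_simp
    ring
  have h3 := hr.pow (N + 1)
  rwa [one_pow] at h3

set_option maxHeartbeats 1000000 in
lemma S16key {N : ℕ} (hN : 2 ≤ N) :
    Tendsto (fun p : ℝ => (p - N) * ∑' k, S16aT N p k) (𝓝[>] (N:ℝ)) (𝓝 (1 / 2 ^ N)) := by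
  have hN1 : 1 ≤ N := by omega
  set L : ℝ := 1 / 2 ^ N with hLdef
  have hL0 : 0 < L := by positivity
  have hL1 : L ≤ 1 := by
    rw [hLdef, div_le_one (by positivity)]
    exact one_le_pow₀ one_le_two
  rw [Metric.tendsto_nhds]
  intro ε hε
  set ε₁ : ℝ := min ε 1 with hε₁def
  have hε₁pos : 0 < ε₁ := lt_min hε one_pos
  have hε₁le : ε₁ ≤ ε := min_le_left _ _
  have hε₁1 : ε₁ ≤ 1 := min_le_right _ _
  obtain ⟨K, hCK, hcK⟩ : ∃ K : ℕ, S16Cv (N - 1) K < 1 + ε₁ / 8 ∧ 1 - ε₁ / 8 < S16cv N K := by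
    have h1 := (S16tendsto_Cv (N - 1)).eventually (eventually_lt_nhds (show (1:ℝ) < 1 + ε₁ / 8 by linarith))
    have h2 := (S16tendsto_cv N).eventually (eventually_gt_nhds (show 1 - ε₁ / 8 < (1:ℝ) by linarith))
    exact (h1.and h2).exists
  have E2 := Metric.tendsto_nhds.mp (S16tendsto_mul_partial_aT hN1 K) (ε₁ / 8) (by positivity)
  have E3 := Metric.tendsto_nhds.mp (S16tendsto_tail_T hN1 K) (ε₁ / 8) (by positivity)
  have E1 : Set.Ioo (N:ℝ) ((N:ℝ) + 1) ∈ 𝓝[>] (N:ℝ) :=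
    Ioo_mem_nhdsGT (by linarith)
  filter_upwards [E1, E2, E3] with p hp1 hp2 hp3
  have hpN : (N:ℝ) < p := hp1.1
  have hpN1 : p ≤ (N:ℝ) + 1 := le_of_lt hp1.2
  have hp0 : (0:ℝ) ≤ p := le_trans (Nat.cast_nonneg N) (le_of_lt hpN)
  have hppos : 0 < p - N := by linarith
  have hS : Summable (S16aT N p) := S16summable_aT hN hpN
  have hsT : Summable (S16tT N p) := S16summable_tT hN1 hpN
  have hS' : Summable (fun k => S16aT N p (k + K)) := (summable_nat_add_iff K).mpr hS
  have hsT' : Summable (fun k => S16tT N p (k + K)) := (summable_nat_add_iff K).mpr hsT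
  set Pa : ℝ := ∑ k ∈ Finset.range K, S16aT N p k with hPadef
  set Ra : ℝ := ∑' k, S16aT N p (k + K) with hRadef
  set Tt : ℝ := ∑' k, S16tT N p (k + K) with hTtdef
  have hsplit : ∑' k, S16aT N p k = Pa + Ra := (Summable.sum_add_tsum_nat_add' hS').symm
  have hRa_ub : Ra ≤ S16Cv (N - 1) K * Tt := by
    calc Ra ≤ ∑' k, S16Cv (N - 1) K * S16tT N p (k + K) :=
          Summable.tsum_le_tsum (fun k => S16aT_ub hN hp0 (Nat.le_add_left K k)) hS' (hsT'.mul_left _)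
      _ = S16Cv (N - 1) K * Tt := tsum_mul_left
  have hRa_lb : S16cv N K * Tt ≤ Ra := by
    calc S16cv N K * Tt = ∑' k, S16cv N K * S16tT N p (k + K) := tsum_mul_left.symm
      _ ≤ Ra := Summable.tsum_le_tsum (fun k => S16aT_lb hN hp0 hpN1 (Nat.le_add_left K k))
          (hsT'.mul_left _) hS'
  have hTt0 : 0 ≤ Tt := tsum_nonneg fun k => by unfold S16tT; positivity
  rw [Real.dist_eq, sub_zero] at hp2
  rw [Real.dist_eq] at hp3 ⊢
  obtain ⟨hA1, hA2⟩ := abs_lt.mp hp2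
  obtain ⟨hx1, hx2⟩ := abs_lt.mp hp3
  set x : ℝ := (p - N) * Tt with hxdef
  have hx0 : 0 ≤ x := mul_nonneg (le_of_lt hppos) hTt0
  set B : ℝ := (p - N) * Ra with hBdef
  have hB_ub : B ≤ S16Cv (N - 1) K * x := by
    rw [hBdef, hxdef]
    calc (p - N) * Ra ≤ (p - N) * (S16Cv (N - 1) K * Tt) :=
          mul_le_mul_of_nonneg_left hRa_ub (le_of_lt hppos)
      _ = S16Cv (N - 1) K * ((p - N) * Tt) := by ring
  have hB_lb : S16cv N K * x ≤ B := by
    rw [hBdef, hxdef]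
    calc S16cv N K * ((p - N) * Tt) = (p - N) * (S16cv N K * Tt) := by ring
      _ ≤ (p - N) * Ra := mul_le_mul_of_nonneg_left hRa_lb (le_of_lt hppos)
  have hCv1 : 1 ≤ S16Cv (N - 1) K := S16Cv_ge_one (by omega) K
  have hcv1 : S16cv N K ≤ 1 := S16cv_le_one hN
  have hcv0 : 0 ≤ S16cv N K := S16cv_nonneg N K
  have hBu : B ≤ (1 + ε₁ / 8) * (L + ε₁ / 8) := by
    refine hB_ub.trans ?_
    apply mul_le_mul (le_of_lt hCK) (by linarith) hx0 (by linarith)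
  have hBl : (1 - ε₁ / 8) * (L - ε₁ / 8) ≤ B := by
    refine le_trans ?_ hB_lb
    calc (1 - ε₁ / 8) * (L - ε₁ / 8) ≤ (1 - ε₁ / 8) * x :=
          mul_le_mul_of_nonneg_left (by linarith) (by linarith)
      _ ≤ S16cv N K * x := mul_le_mul_of_nonneg_right (le_of_lt hcK) hx0
  have hprod1 : ε₁ * L ≤ ε₁ := by nlinarith
  have hprod2 : ε₁ * ε₁ ≤ ε₁ := by nlinarith
  have hcalc : (p - N) * ∑' k, S16aT N p k = (p - N) * Pa + B := by
    rw [hsplit, hBdef]; ring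
  rw [hcalc, abs_lt]
  constructor <;> nlinarith

/-- With `ω_N = π^(N/2)/Γ(N/2+1)`, `p = N/s`, and
`γ_{s,N} = 2(Nω_N)² Γ(p+1)/N! · Σ_k (N+k-1)!/k! (N+2k)^(-p)`, one has
`lim_{s→1⁻} (1-s) γ_{s,N} = N ω_N² / 2^(N-1)`. -/
theorem stmt16 (N : ℕ) (hN : 2 ≤ N)
    (ω : ℝ) (hω : ω = Real.pi ^ ((N : ℝ) / 2) / Real.Gamma ((N : ℝ) / 2 + 1))
    (γ : ℝ → ℝ)
    (hγ : ∀ s ∈ Set.Ioo (0 : ℝ) 1, γ s =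
      2 * ((N : ℝ) * ω) ^ 2 * Real.Gamma ((N : ℝ) / s + 1) / (N.factorial : ℝ)
        * ∑' k : ℕ, ((N + k - 1).factorial : ℝ) / (k.factorial : ℝ)
            * (1 / ((N : ℝ) + 2 * k) ^ ((N : ℝ) / s))) :
    Tendsto (fun s : ℝ => (1 - s) * γ s)
      (nhdsWithin 1 (Set.Iio 1)) (nhds ((N : ℝ) * ω ^ 2 / 2 ^ (N - 1))) := by
  have hN0 : (0:ℝ) < (N:ℝ) := by exact_mod_cast (by omega : 0 < N)
  have hfact : ((N.factorial : ℝ)) ≠ 0 := by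
    exact_mod_cast N.factorial_ne_zero
  have hIoo : Set.Ioo (0:ℝ) 1 ∈ 𝓝[<] (1:ℝ) :=
    Ioo_mem_nhdsLT one_pos
  have hmap : Tendsto (fun s : ℝ => (N:ℝ) / s) (𝓝[<] (1:ℝ)) (𝓝[>] (N:ℝ)) := by
    rw [tendsto_nhdsWithin_iff]
    constructor
    · have hc : ContinuousAt (fun s : ℝ => (N:ℝ) / s) 1 :=
        continuousAt_const.div continuousAt_id one_ne_zero
      have h2 := hc.tendsto.mono_left (nhdsWithin_le_nhds (s := Set.Iio (1:ℝ)))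
      simpa using h2
    · filter_upwards [hIoo] with s hs
      rw [Set.mem_Ioi, lt_div_iff₀ hs.1]
      nlinarith [hs.1, hs.2]
  have hcomp : Tendsto (fun s : ℝ => ((N:ℝ)/s - N) * ∑' k, S16aT N ((N:ℝ)/s) k)
      (𝓝[<] (1:ℝ)) (𝓝 (1 / 2 ^ N)) := (S16key hN).comp hmap
  have hGammaCont : ContinuousAt Real.Gamma ((N:ℝ)/1 + 1) := by
    have h1 : ((N:ℝ)/1 + 1) = (N:ℝ) + 1 := by norm_num
    rw [h1]
    apply (Real.differentiableAt_Gamma ?_).continuousAt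
    intro m
    have h2 : (0:ℝ) ≤ (m:ℝ) := Nat.cast_nonneg m
    intro h; rw [neg_eq_iff_eq_neg.mp h.symm] at h2; nlinarith
  have hf1 : ContinuousAt (fun s : ℝ => (N:ℝ)/s + 1) 1 :=
    (continuousAt_const.div continuousAt_id one_ne_zero).add continuousAt_const
  have hAfun : ContinuousAt (fun s : ℝ => Real.Gamma ((N:ℝ)/s + 1)) 1 :=
    ContinuousAt.comp (g := Real.Gamma) (f := fun s : ℝ => (N:ℝ)/s + 1) hGammaCont hf1
  have hA : Tendsto (fun s : ℝ => 2 * ((N:ℝ) * ω) ^ 2 * Real.Gamma ((N:ℝ)/s + 1) / (N.factorial : ℝ))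
      (𝓝[<] (1:ℝ)) (𝓝 (2 * ((N:ℝ) * ω) ^ 2)) := by
    have hc : ContinuousAt
        (fun s : ℝ => 2 * ((N:ℝ) * ω) ^ 2 * Real.Gamma ((N:ℝ)/s + 1) / (N.factorial : ℝ)) 1 :=
      (continuousAt_const.mul hAfun).div continuousAt_const hfact
    have h2 := hc.tendsto.mono_left (nhdsWithin_le_nhds (s := Set.Iio (1:ℝ)))
    have hval1 : 2 * ((N:ℝ) * ω) ^ 2 * Real.Gamma ((N:ℝ)/1 + 1) / (N.factorial : ℝ)
        = 2 * ((N:ℝ) * ω) ^ 2 := by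
      rw [show (N:ℝ)/1 = (N:ℝ) by norm_num, Real.Gamma_nat_eq_factorial,
        mul_div_assoc, div_self hfact, mul_one]
    rwa [hval1] at h2
  have hB : Tendsto (fun s : ℝ => s / (N:ℝ)) (𝓝[<] (1:ℝ)) (𝓝 (1 / (N:ℝ))) :=
    ((continuousAt_id.div continuousAt_const (ne_of_gt hN0)).tendsto.mono_left
      nhdsWithin_le_nhds)
  have hprod := hA.mul (hB.mul hcomp)
  have heq : (fun s : ℝ => 2 * ((N:ℝ) * ω) ^ 2 * Real.Gamma ((N:ℝ)/s + 1) / (N.factorial : ℝ)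
      * (s / (N:ℝ) * (((N:ℝ)/s - N) * ∑' k, S16aT N ((N:ℝ)/s) k)))
      =ᶠ[𝓝[<] (1:ℝ)] (fun s : ℝ => (1 - s) * γ s) := by
    filter_upwards [hIoo] with s hs
    rw [hγ s hs]
    have hs0 : s ≠ 0 := ne_of_gt hs.1
    have h1 : s / (N:ℝ) * ((N:ℝ)/s - N) = 1 - s := by
      field_simp
    unfold S16aT
    set T := ∑' k : ℕ, ((N + k - 1).factorial : ℝ) / (k.factorial : ℝ)
        * (1 / ((N : ℝ) + 2 * k) ^ ((N : ℝ) / s)) with hT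
    set A := 2 * ((N:ℝ) * ω) ^ 2 * Real.Gamma ((N:ℝ)/s + 1) / (N.factorial : ℝ) with hA2
    calc A * (s / (N:ℝ) * (((N:ℝ)/s - N) * T))
        = A * ((s / (N:ℝ) * ((N:ℝ)/s - N)) * T) := by ring
      _ = (1 - s) * (A * T) := by rw [h1]; ring
  have hfinal := hprod.congr' heq
  have hval : 2 * ((N:ℝ) * ω) ^ 2 * (1 / (N:ℝ) * (1 / 2 ^ N)) = (N:ℝ) * ω ^ 2 / 2 ^ (N - 1) := by
    have h2N : (2:ℝ) ^ N = 2 ^ (N - 1) * 2 := by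
      rw [← pow_succ]
      congr 1
      omega
    rw [h2N]
    have h2 : ((2:ℝ) ^ (N - 1)) ≠ 0 := by positivity
    field_simp
  rwa [hval] at hfinal
end
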